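/- (Per-edge answer-size bound, eq. (42)) In any SPIR scheme on a graph G satisfying the system model: for every pair of servers (i, j) that share a message (i.e., {i, j} is an edge of G) and for every desired index k ∈ [K] (irrespective of whether message k is the one stored on that edge), H(A_i^{[k]} | 𝒬) + H(A_j^{[k]} | 𝒬) ≥ 2·L. -/

import Mathlib

open Finset

noncomputable section

namespace SPIR

variable {Ω : Type} [Fintype Ω]

/-- Probability of an event under the probability mass function `μ`
on the finite sample space `Ω`. -/
def pr (μ : Ω → ℝ) (E : Set Ω) : ℝ := ∑ ω, E.indicator μ ω

/-- Shannon entropy of the random variable `X`, measured in `q`-ary units. -/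
def ent (q : ℕ) (μ : Ω → ℝ) {α : Type*} (X : Ω → α) : ℝ :=
  -∑ ω, μ ω * Real.logb q (pr μ {ω' | X ω' = X ω})

/-- Conditional Shannon entropy `H(X | Y)` in `q`-ary units. -/
def condEnt (q : ℕ) (μ : Ω → ℝ) {α β : Type*} (X : Ω → α) (Y : Ω → β) : ℝ :=
  ent q μ (fun ω => (X ω, Y ω)) - ent q μ Y

/-- Mutual information `I(X ; Y)` in `q`-ary units. -/
def mutInf (q : ℕ) (μ : Ω → ℝ) {α β : Type*} (X : Ω → α) (Y : Ω → β) : ℝ :=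
  ent q μ X + ent q μ Y - ent q μ (fun ω => (X ω, Y ω))

/-- Two random variables have the same (joint) distribution. -/
def IdentDist (μ : Ω → ℝ) {α : Type*} (X Y : Ω → α) : Prop :=
  ∀ s : Set α, pr μ (X ⁻¹' s) = pr μ (Y ⁻¹' s)

/-- Independence of two random variables. -/
def IndepRV (μ : Ω → ℝ) {α β : Type*} (X : Ω → α) (Y : Ω → β) : Prop :=
  ∀ (s : Set α) (t : Set β),
    pr μ (X ⁻¹' s ∩ Y ⁻¹' t) = pr μ (X ⁻¹' s) * pr μ (Y ⁻¹' t)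

/-- A symmetric private information retrieval (SPIR) scheme on a graph-replicated
database, following the system model:  `N` servers are the vertices of a simple graph
whose `K` edges are messages; message `W k` (uniform on `F^L`) and the message-specific
common randomness `R k` are stored exactly at the two endpoints `e1 k`, `e2 k` of
edge `k`.  All Shannon quantities are in `q`-ary units, `q = |F|`. -/
structure Scheme (q N K L : ℕ) (F : Type) [Field F] [Fintype F]
    (Ω : Type) [Fintype Ω] where
  /-- the underlying probability mass function -/
  μ : Ω → ℝ
  μ_nonneg : ∀ ω, 0 ≤ μ ω
  μ_sum : ∑ ω, μ ω = 1
  card_F : Fintype.card F = q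
  /-- first endpoint of each edge (message) -/
  e1 : Fin K → Fin N
  /-- second endpoint of each edge (message) -/
  e2 : Fin K → Fin N
  edge_ne : ∀ k, e1 k ≠ e2 k
  /-- the graph is simple: distinct edges have distinct endpoint sets -/
  edge_inj : ∀ k k', ({e1 k, e2 k} : Set (Fin N)) = {e1 k', e2 k'} → k = k'
  /-- alphabet of the queries -/
  QT : Type
  /-- alphabet of the answers -/
  AT : Type
  /-- alphabet of the common randomness -/
  RT : Type
  /-- alphabet of the user's query randomness -/
  UT : Type
  /-- the messages -/
  W : Fin K → Ω → Fin L → F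
  /-- the message-specific common randomness -/
  R : Fin K → Ω → RT
  /-- the user's query randomness `𝒬` -/
  U : Ω → UT
  /-- `Q n k` : query sent to server `n` when the desired message index is `k` -/
  Q : Fin N → Fin K → Ω → QT
  /-- `A n k` : answer of server `n` when the desired message index is `k` -/
  A : Fin N → Fin K → Ω → AT
  /-- the messages are jointly independent, each uniform on `F^L` -/
  W_unif : ∀ w : Fin K → Fin L → F,
    pr μ {ω | (fun k => W k ω) = w} = (1 / (q : ℝ) ^ L) ^ K
  /-- the common randomness variables are jointly independent of each other and of the
  messages -/
  R_indep : ∀ (s : Fin K → Set RT) (t : Set (Fin K → Fin L → F)),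
    pr μ {ω | (fun k => W k ω) ∈ t ∧ ∀ k, R k ω ∈ s k}
      = pr μ {ω | (fun k => W k ω) ∈ t} * ∏ k, pr μ {ω | R k ω ∈ s k}
  /-- the common randomness variables are identically distributed -/
  R_ident : ∀ k k', IdentDist μ (R k) (R k')
  /-- the user's query randomness is independent of `(𝒲, ℛ)` -/
  U_indep : IndepRV μ U (fun ω => (fun k => W k ω, fun k => R k ω))
  /-- the queries are a deterministic function of `𝒬` -/
  query_det : ∀ k, condEnt q μ (fun ω (n : Fin N) => Q n k ω) U = 0
  /-- the answer of a server is a deterministic function of its query, its stored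
  messages `𝒲ₙ` and its stored randomness `ℛₙ` -/
  answer_det : ∀ n k, condEnt q μ (A n k)
    (fun ω => (Q n k ω,
      fun j : {j : Fin K // e1 j = n ∨ e2 j = n} => W j ω,
      fun j : {j : Fin K // e1 j = n ∨ e2 j = n} => R j ω)) = 0
  /-- user privacy: `(Qₙ^[k], Aₙ^[k], 𝒲ₙ, ℛₙ)` has the same distribution for all `k` -/
  user_privacy : ∀ (n : Fin N) (k k' : Fin K), IdentDist μ
    (fun ω => (Q n k ω, A n k ω,
      fun j : {j : Fin K // e1 j = n ∨ e2 j = n} => W j ω,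
      fun j : {j : Fin K // e1 j = n ∨ e2 j = n} => R j ω))
    (fun ω => (Q n k' ω, A n k' ω,
      fun j : {j : Fin K // e1 j = n ∨ e2 j = n} => W j ω,
      fun j : {j : Fin K // e1 j = n ∨ e2 j = n} => R j ω))
  /-- reliability: the desired message is recovered from all answers and `𝒬` -/
  reliability : ∀ k, condEnt q μ (W k)
    (fun ω => (fun n : Fin N => A n k ω, U ω)) = 0
  /-- database privacy -/
  db_privacy : ∀ (k : Fin K) (J : Set (Fin K)), k ∉ J →
    mutInf q μ (fun ω => fun j : J => W j ω)
      (fun ω => (fun n : Fin N => A n k ω,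
        fun n : Fin N => Q n k ω,
        fun ℓ : {ℓ : Fin K // ℓ ∉ J} => R ℓ ω,
        fun ℓ : {ℓ : Fin K // ℓ ∉ J ∧ ℓ ≠ k} => W ℓ ω,
        U ω)) = 0
  /-- randomness recoverability at each server storing `R j` -/
  rand_recov : ∀ (k j : Fin K) (n : Fin N), (e1 j = n ∨ e2 j = n) →
    condEnt q μ (R j)
      (fun ω => (A n k ω,
        fun m : {m : Fin K // e1 m = n ∨ e2 m = n} => W m ω,
        fun m : {m : Fin K // (e1 m = n ∨ e2 m = n) ∧ m ≠ j} => R m ω,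
        Q n k ω)) = 0

/-- The simple graph underlying an SPIR scheme. -/
def schemeGraph {q N K L : ℕ} {F : Type} [Field F] [Fintype F]
    {Ω : Type} [Fintype Ω] (S : Scheme q N K L F Ω) : SimpleGraph (Fin N) :=
  SimpleGraph.fromRel (fun i j => ∃ k, S.e1 k = i ∧ S.e2 k = j)



/-! ### basic probability lemmas -/

structure IsPMF (μ : Ω → ℝ) : Prop where
  nonneg : ∀ ω, 0 ≤ μ ω
  sum_one : ∑ ω, μ ω = 1

variable {μ : Ω → ℝ} {q : ℕ}

lemma pr_nonneg (hμ : IsPMF μ) (E : Set Ω) : 0 ≤ pr μ E :=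
  Finset.sum_nonneg fun ω _ => Set.indicator_nonneg (fun a _ => hμ.nonneg a) ω

lemma pr_mono (hμ : IsPMF μ) {E F : Set Ω} (h : E ⊆ F) : pr μ E ≤ pr μ F :=
  Finset.sum_le_sum fun ω _ => Set.indicator_le_indicator_of_subset h hμ.nonneg ω

lemma pr_univ (hμ : IsPMF μ) : pr μ Set.univ = 1 := by
  unfold pr; rw [Set.indicator_univ]; exact hμ.sum_one

lemma pr_le_one (hμ : IsPMF μ) (E : Set Ω) : pr μ E ≤ 1 := by
  rw [← pr_univ hμ]; exact pr_mono hμ (Set.subset_univ E)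

lemma single_le_pr (hμ : IsPMF μ) {E : Set Ω} {ω : Ω} (h : ω ∈ E) : μ ω ≤ pr μ E := by
  unfold pr
  have h2 := Finset.single_le_sum (f := fun ω => E.indicator μ ω)
    (fun i _ => Set.indicator_nonneg (fun a _ => hμ.nonneg a) i) (Finset.mem_univ ω)
  simp only [Set.indicator_of_mem h] at h2
  exact h2

lemma pr_eq_sum_filter (E : Set Ω) [DecidablePred (· ∈ E)] :
    pr μ E = ∑ ω ∈ univ.filter (· ∈ E), μ ω := by
  rw [Finset.sum_filter]
  exact Finset.sum_congr rfl fun ω _ => Set.indicator_apply E μ ω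

lemma pr_pos_of_mem (hμ : IsPMF μ) {E : Set Ω} {ω : Ω} (h : ω ∈ E) (hω : μ ω ≠ 0) :
    0 < pr μ E :=
  lt_of_lt_of_le ((hμ.nonneg ω).lt_of_ne (Ne.symm hω)) (single_le_pr hμ h)

/-- sum of probabilities of pairwise disjoint events, all contained in `F`,
is at most `pr μ F`. -/
lemma sum_pr_disjoint_le (hμ : IsPMF μ) {ι : Type*} [DecidableEq ι] (s : Finset ι)
    (E : ι → Set Ω) (F : Set Ω)
    (hd : ∀ i ∈ s, ∀ j ∈ s, i ≠ j → ∀ ω, ω ∈ E i → ω ∉ E j)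
    (hsub : ∀ i ∈ s, E i ⊆ F) :
    ∑ i ∈ s, pr μ (E i) ≤ pr μ F := by
  classical
  calc ∑ i ∈ s, pr μ (E i)
      = ∑ i ∈ s, ∑ ω ∈ univ.filter (· ∈ E i), μ ω :=
        Finset.sum_congr rfl fun i _ => pr_eq_sum_filter _
    _ = ∑ ω ∈ s.biUnion (fun i => univ.filter (· ∈ E i)), μ ω := by
        rw [Finset.sum_biUnion]
        intro i hi j hj hij
        simp only [Finset.disjoint_left, Finset.mem_filter]
        rintro ω ⟨-, h1⟩ ⟨-, h2⟩
        exact hd i hi j hj hij ω h1 h2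
    _ ≤ ∑ ω ∈ univ.filter (· ∈ F), μ ω := by
        apply Finset.sum_le_sum_of_subset_of_nonneg
        · intro ω hω
          simp only [Finset.mem_biUnion, Finset.mem_filter] at hω ⊢
          obtain ⟨i, hi, -, hmem⟩ := hω
          exact ⟨Finset.mem_univ ω, hsub i hi hmem⟩
        · exact fun ω _ _ => hμ.nonneg ω
    _ = pr μ F := (pr_eq_sum_filter _).symm


/-! ### entropy congruence -/

open Real in
lemma ent_congr {α β : Type*} {X : Ω → α} {Y : Ω → β}
    (h : ∀ ω' ω, X ω' = X ω ↔ Y ω' = Y ω) : ent q μ X = ent q μ Y := by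
  unfold ent
  congr 1
  apply Finset.sum_congr rfl
  intro ω _
  have : {ω' | X ω' = X ω} = {ω' | Y ω' = Y ω} := Set.ext fun ω' => h ω' ω
  rw [this]

/-- `X` is almost surely determined by `Y`. -/
def aDet (μ : Ω → ℝ) {α β : Type*} (Y : Ω → β) (X : Ω → α) : Prop :=
  ∀ ω ω', μ ω ≠ 0 → μ ω' ≠ 0 → Y ω = Y ω' → X ω = X ω'

lemma aDet_trans {α β γ : Type*} {Z : Ω → γ} {Y : Ω → β} {X : Ω → α}
    (h1 : aDet μ Z Y) (h2 : aDet μ Y X) : aDet μ Z X :=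
  fun ω ω' hω hω' hz => h2 ω ω' hω hω' (h1 ω ω' hω hω' hz)

lemma aDet_of_det {α β : Type*} {Y : Ω → β} {X : Ω → α}
    (h : ∀ ω ω', Y ω = Y ω' → X ω = X ω') : aDet μ Y X :=
  fun ω ω' _ _ hz => h ω ω' hz

lemma aDet_pair {α β γ : Type*} {Z : Ω → γ} {Y : Ω → β} {X : Ω → α}
    (h1 : aDet μ Z X) (h2 : aDet μ Z Y) : aDet μ Z (fun ω => (X ω, Y ω)) :=
  fun ω ω' hω hω' hz => by
    simp only [Prod.mk.injEq]
    exact ⟨h1 ω ω' hω hω' hz, h2 ω ω' hω hω' hz⟩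

/-- adding an a.s. determined component does not change the entropy. -/
lemma ent_pair_eq_of_aDet (hμ : IsPMF μ) {α β : Type*} {X : Ω → α} {Y : Ω → β}
    (h : aDet μ Y X) :
    ent q μ (fun ω => (X ω, Y ω)) = ent q μ Y := by
  classical
  unfold ent
  congr 1
  apply Finset.sum_congr rfl
  intro ω _
  by_cases hω : μ ω = 0
  · rw [hω]; ring
  · have : pr μ {ω' | (X ω', Y ω') = (X ω, Y ω)} = pr μ {ω' | Y ω' = Y ω} := by
      rw [pr_eq_sum_filter, pr_eq_sum_filter]
      apply Finset.sum_subset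
      · intro ω' hω'
        simp only [Finset.mem_filter, Set.mem_setOf_eq, Prod.mk.injEq] at hω' ⊢
        exact ⟨hω'.1, hω'.2.2⟩
      · intro ω' h1 h2
        simp only [Finset.mem_filter, Set.mem_setOf_eq, Prod.mk.injEq] at h1 h2
        by_contra hne
        exact h2 ⟨h1.1, h ω' ω hne hω h1.2, h1.2⟩
    rw [this]

set_option linter.unusedSectionVars false
set_option linter.unusedVariables false

/-! ### submodularity (the key analytic inequality) -/

open Real in
lemma ent_submod (hq : 1 < q) (hμ : IsPMF μ) {α β γ : Type*}
    (X : Ω → α) (Y : Ω → β) (Z : Ω → γ) :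
    ent q μ (fun ω => (X ω, Y ω, Z ω)) + ent q μ Z
      ≤ ent q μ (fun ω => (X ω, Z ω)) + ent q μ (fun ω => (Y ω, Z ω)) := by
  classical
  have hq1 : (1:ℝ) < (q:ℝ) := by exact_mod_cast hq
  have hlq : 0 < Real.log q := Real.log_pos hq1
  set pA : α → γ → ℝ := fun x z => pr μ {ω | X ω = x ∧ Z ω = z} with hpA
  set pB : β → γ → ℝ := fun y z => pr μ {ω | Y ω = y ∧ Z ω = z} with hpB
  set pC : α → β → γ → ℝ := fun x y z => pr μ {ω | X ω = x ∧ Y ω = y ∧ Z ω = z} with hpC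
  set pD : γ → ℝ := fun z => pr μ {ω | Z ω = z} with hpD
  have eA : ent q μ (fun ω => (X ω, Z ω)) = -∑ ω, μ ω * logb q (pA (X ω) (Z ω)) := by
    unfold ent; congr 1; apply Finset.sum_congr rfl; intro ω _
    have : {ω' | (X ω', Z ω') = (X ω, Z ω)} = {ω' | X ω' = X ω ∧ Z ω' = Z ω} := by
      ext ω'; simp [Prod.ext_iff]
    rw [this]
  have eB : ent q μ (fun ω => (Y ω, Z ω)) = -∑ ω, μ ω * logb q (pB (Y ω) (Z ω)) := by
    unfold ent; congr 1; apply Finset.sum_congr rfl; intro ω _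
    have : {ω' | (Y ω', Z ω') = (Y ω, Z ω)} = {ω' | Y ω' = Y ω ∧ Z ω' = Z ω} := by
      ext ω'; simp [Prod.ext_iff]
    rw [this]
  have eC : ent q μ (fun ω => (X ω, Y ω, Z ω))
      = -∑ ω, μ ω * logb q (pC (X ω) (Y ω) (Z ω)) := by
    unfold ent; congr 1; apply Finset.sum_congr rfl; intro ω _
    have : {ω' | (X ω', Y ω', Z ω') = (X ω, Y ω, Z ω)}
        = {ω' | X ω' = X ω ∧ Y ω' = Y ω ∧ Z ω' = Z ω} := by
      ext ω'; simp [Prod.ext_iff]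
    rw [this]
  have eD : ent q μ Z = -∑ ω, μ ω * logb q (pD (Z ω)) := rfl
  rw [eA, eB, eC, eD]
  set G : α × β × γ → ℝ := fun v => pA v.1 v.2.2 * pB v.2.1 v.2.2
      / (pC v.1 v.2.1 v.2.2 * pD v.2.2) with hG
  set T : Ω → α × β × γ := fun ω => (X ω, Y ω, Z ω) with hT
  have hposA : ∀ ω, μ ω ≠ 0 → 0 < pA (X ω) (Z ω) := fun ω hω =>
    pr_pos_of_mem hμ (by simp : ω ∈ {ω' | X ω' = X ω ∧ Z ω' = Z ω}) hω
  have hposB : ∀ ω, μ ω ≠ 0 → 0 < pB (Y ω) (Z ω) := fun ω hω =>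
    pr_pos_of_mem hμ (by simp : ω ∈ {ω' | Y ω' = Y ω ∧ Z ω' = Z ω}) hω
  have hposC : ∀ ω, μ ω ≠ 0 → 0 < pC (X ω) (Y ω) (Z ω) := fun ω hω =>
    pr_pos_of_mem hμ (by simp : ω ∈ {ω' | X ω' = X ω ∧ Y ω' = Y ω ∧ Z ω' = Z ω}) hω
  have hposD : ∀ ω, μ ω ≠ 0 → 0 < pD (Z ω) := fun ω hω =>
    pr_pos_of_mem hμ (by simp : ω ∈ {ω' | Z ω' = Z ω}) hω
  have key : ∑ ω, μ ω * G (T ω) ≤ 1 → (-∑ ω, μ ω * logb q (pC (X ω) (Y ω) (Z ω)))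
      + -(∑ ω, μ ω * logb q (pD (Z ω)))
      ≤ (-∑ ω, μ ω * logb q (pA (X ω) (Z ω))) + -(∑ ω, μ ω * logb q (pB (Y ω) (Z ω))) := by
    intro hsum
    rw [← neg_add, ← neg_add, neg_le_neg_iff, ← Finset.sum_add_distrib,
      ← Finset.sum_add_distrib]
    have term : ∀ ω ∈ (univ : Finset Ω),
        μ ω * logb q (pA (X ω) (Z ω)) + μ ω * logb q (pB (Y ω) (Z ω))
        ≤ (μ ω * logb q (pC (X ω) (Y ω) (Z ω)) + μ ω * logb q (pD (Z ω)))
          + μ ω * (G (T ω) - 1) / Real.log q := by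
      intro ω _
      by_cases hω : μ ω = 0
      · simp [hω]
      · have h1 := hposA ω hω; have h2 := hposB ω hω
        have h3 := hposC ω hω; have h4 := hposD ω hω
        have hμω : 0 < μ ω := (hμ.nonneg ω).lt_of_ne (Ne.symm hω)
        have hGval : G (T ω) = pA (X ω) (Z ω) * pB (Y ω) (Z ω)
            / (pC (X ω) (Y ω) (Z ω) * pD (Z ω)) := rfl
        have hGpos : 0 < G (T ω) := by rw [hGval]; positivity
        have hlog : logb q (pA (X ω) (Z ω)) + logb q (pB (Y ω) (Z ω))
            - logb q (pC (X ω) (Y ω) (Z ω)) - logb q (pD (Z ω))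
            = Real.log (G (T ω)) / Real.log q := by
          rw [hGval, Real.log_div (by positivity) (by positivity),
            Real.log_mul (ne_of_gt h1) (ne_of_gt h2),
            Real.log_mul (ne_of_gt h3) (ne_of_gt h4)]
          simp only [Real.logb]
          ring
        have hle : Real.log (G (T ω)) ≤ G (T ω) - 1 := Real.log_le_sub_one_of_pos hGpos
        have h5 : Real.log (G (T ω)) / Real.log q ≤ (G (T ω) - 1) / Real.log q := by
          gcongr
        have h6 := hlog.trans_le h5
        have h7 : logb q (pA (X ω) (Z ω)) + logb q (pB (Y ω) (Z ω))
            ≤ logb q (pC (X ω) (Y ω) (Z ω)) + logb q (pD (Z ω))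
              + (G (T ω) - 1) / Real.log q := by linarith
        calc μ ω * logb q (pA (X ω) (Z ω)) + μ ω * logb q (pB (Y ω) (Z ω))
            = μ ω * (logb q (pA (X ω) (Z ω)) + logb q (pB (Y ω) (Z ω))) := by ring
          _ ≤ μ ω * (logb q (pC (X ω) (Y ω) (Z ω)) + logb q (pD (Z ω))
              + (G (T ω) - 1) / Real.log q) :=
              mul_le_mul_of_nonneg_left h7 (le_of_lt hμω)
          _ = (μ ω * logb q (pC (X ω) (Y ω) (Z ω)) + μ ω * logb q (pD (Z ω)))
              + μ ω * (G (T ω) - 1) / Real.log q := by ring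
    have hsum2 : ∑ ω, μ ω * (G (T ω) - 1) / Real.log q ≤ 0 := by
      have heq : ∑ ω, μ ω * (G (T ω) - 1) / Real.log q
          = ((∑ ω, μ ω * G (T ω)) - 1) / Real.log q := by
        rw [← Finset.sum_div]
        congr 1
        conv_rhs => rw [← hμ.sum_one]
        rw [← Finset.sum_sub_distrib]
        apply Finset.sum_congr rfl; intro ω _; ring
      rw [heq]
      apply div_nonpos_of_nonpos_of_nonneg _ (le_of_lt hlq)
      linarith
    calc ∑ ω, (μ ω * logb q (pA (X ω) (Z ω)) + μ ω * logb q (pB (Y ω) (Z ω)))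
        ≤ ∑ ω, ((μ ω * logb q (pC (X ω) (Y ω) (Z ω)) + μ ω * logb q (pD (Z ω)))
            + μ ω * (G (T ω) - 1) / Real.log q) := Finset.sum_le_sum term
      _ = ∑ ω, (μ ω * logb q (pC (X ω) (Y ω) (Z ω)) + μ ω * logb q (pD (Z ω)))
            + ∑ ω, μ ω * (G (T ω) - 1) / Real.log q := Finset.sum_add_distrib
      _ ≤ ∑ ω, (μ ω * logb q (pC (X ω) (Y ω) (Z ω)) + μ ω * logb q (pD (Z ω))) := by
            linarith
  apply key
  set S : Finset Ω := univ.filter (fun ω => μ ω ≠ 0) with hS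
  have hzero : ∑ ω, μ ω * G (T ω) = ∑ ω ∈ S, μ ω * G (T ω) := by
    symm
    apply Finset.sum_subset (Finset.subset_univ S)
    intro ω _ hω
    simp only [hS, Finset.mem_filter, Finset.mem_univ, true_and, not_not] at hω
    rw [hω]; ring
  rw [hzero]
  set V : Finset (α × β × γ) := S.image T with hV
  have step1 : ∑ ω ∈ S, μ ω * G (T ω) ≤ ∑ v ∈ V, pC v.1 v.2.1 v.2.2 * G v := by
    rw [← Finset.sum_fiberwise_of_maps_to (fun ω hω => Finset.mem_image_of_mem T hω)
      (fun ω => μ ω * G (T ω))]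
    apply Finset.sum_le_sum
    intro v hv
    have hGnn : 0 ≤ G v := by
      have hGv : G v = pA v.1 v.2.2 * pB v.2.1 v.2.2
          / (pC v.1 v.2.1 v.2.2 * pD v.2.2) := rfl
      rw [hGv]
      have n1 : 0 ≤ pA v.1 v.2.2 := pr_nonneg hμ _
      have n2 : 0 ≤ pB v.2.1 v.2.2 := pr_nonneg hμ _
      have n3 : 0 ≤ pC v.1 v.2.1 v.2.2 := pr_nonneg hμ _
      have n4 : 0 ≤ pD v.2.2 := pr_nonneg hμ _
      positivity
    calc ∑ ω ∈ S.filter (fun ω => T ω = v), μ ω * G (T ω)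
        = (∑ ω ∈ S.filter (fun ω => T ω = v), μ ω) * G v := by
          rw [Finset.sum_mul]
          apply Finset.sum_congr rfl
          intro ω hω
          rw [(Finset.mem_filter.mp hω).2]
      _ ≤ pC v.1 v.2.1 v.2.2 * G v := by
          apply mul_le_mul_of_nonneg_right _ hGnn
          have hCs : pC v.1 v.2.1 v.2.2
              = ∑ ω ∈ univ.filter (· ∈ {ω | X ω = v.1 ∧ Y ω = v.2.1 ∧ Z ω = v.2.2}), μ ω :=
            pr_eq_sum_filter _
          rw [hCs]
          apply Finset.sum_le_sum_of_subset_of_nonneg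
          · intro ω hω
            simp only [Finset.mem_filter, Set.mem_setOf_eq, Finset.mem_univ, true_and] at hω ⊢
            obtain ⟨-, h2⟩ := hω
            rw [← h2]
            exact ⟨rfl, rfl, rfl⟩
          · exact fun ω _ _ => hμ.nonneg ω
  have step2 : ∑ v ∈ V, pC v.1 v.2.1 v.2.2 * G v
      ≤ ∑ v ∈ V, pA v.1 v.2.2 * pB v.2.1 v.2.2 / pD v.2.2 := by
    apply Finset.sum_le_sum
    intro v hv
    obtain ⟨ω₀, hω₀S, hω₀⟩ := Finset.mem_image.mp hv
    have hω₀ne : μ ω₀ ≠ 0 := by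
      have := (Finset.mem_filter.mp hω₀S).2; exact this
    have hC : 0 < pC v.1 v.2.1 v.2.2 := by rw [← hω₀]; exact hposC ω₀ hω₀ne
    have hD : 0 < pD v.2.2 := by rw [← hω₀]; exact hposD ω₀ hω₀ne
    have hGv : G v = pA v.1 v.2.2 * pB v.2.1 v.2.2
        / (pC v.1 v.2.1 v.2.2 * pD v.2.2) := rfl
    rw [hGv]
    rw [show pC v.1 v.2.1 v.2.2 * (pA v.1 v.2.2 * pB v.2.1 v.2.2
        / (pC v.1 v.2.1 v.2.2 * pD v.2.2))
        = pA v.1 v.2.2 * pB v.2.1 v.2.2 / pD v.2.2 by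
      field_simp]
  have step3 : ∑ v ∈ V, pA v.1 v.2.2 * pB v.2.1 v.2.2 / pD v.2.2 ≤ 1 := by
    set Vz : Finset γ := V.image (fun v => v.2.2) with hVz
    have hfib := Finset.sum_fiberwise_of_maps_to (s := V) (t := Vz) (g := fun v => v.2.2)
      (fun v hv => Finset.mem_image_of_mem (fun v => v.2.2) hv)
      (fun v => pA v.1 v.2.2 * pB v.2.1 v.2.2 / pD v.2.2)
    rw [← hfib]
    have inner_le : ∀ z ∈ Vz,
        ∑ v ∈ V.filter (fun v => v.2.2 = z), pA v.1 v.2.2 * pB v.2.1 v.2.2 / pD v.2.2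
          ≤ pD z := by
      intro z hz
      obtain ⟨v₀, hv₀V, hv₀⟩ := Finset.mem_image.mp hz
      obtain ⟨ω₀, hω₀S, hω₀⟩ := Finset.mem_image.mp hv₀V
      have hω₀ne : μ ω₀ ≠ 0 := (Finset.mem_filter.mp hω₀S).2
      have hDz : 0 < pD z := by
        rw [← hv₀, ← hω₀]; exact hposD ω₀ hω₀ne
      set Vf := V.filter (fun v => v.2.2 = z) with hVf
      have hcong : ∑ v ∈ Vf, pA v.1 v.2.2 * pB v.2.1 v.2.2 / pD v.2.2
          = ∑ v ∈ Vf, pA v.1 z * pB v.2.1 z / pD z := by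
        apply Finset.sum_congr rfl
        intro v hv
        rw [(Finset.mem_filter.mp hv).2]
      rw [hcong]
      set e : α × β × γ → α × β := fun v => (v.1, v.2.1) with he
      have hinj : ∀ v ∈ Vf, ∀ w ∈ Vf, e v = e w → v = w := by
        intro v hv w hw hvw
        have hv2 := (Finset.mem_filter.mp hv).2
        have hw2 := (Finset.mem_filter.mp hw).2
        simp only [he, Prod.mk.injEq] at hvw
        have : v.2 = w.2 := Prod.ext hvw.2 (hv2.trans hw2.symm)
        exact Prod.ext hvw.1 this
      have himg : ∑ p ∈ Vf.image e, pA p.1 z * pB p.2 z / pD z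
          = ∑ v ∈ Vf, pA v.1 z * pB v.2.1 z / pD z :=
        Finset.sum_image hinj
      rw [← himg]
      set W1 : Finset α := (Vf.image e).image Prod.fst with hW1
      set W2 : Finset β := (Vf.image e).image Prod.snd with hW2
      have hsub : Vf.image e ⊆ W1 ×ˢ W2 := by
        intro p hp
        rw [Finset.mem_product]
        exact ⟨Finset.mem_image_of_mem _ hp, Finset.mem_image_of_mem _ hp⟩
      have hnn : ∀ p ∈ W1 ×ˢ W2, 0 ≤ pA p.1 z * pB p.2 z / pD z := by
        intro p _
        have n1 : 0 ≤ pA p.1 z := pr_nonneg hμ _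
        have n2 : 0 ≤ pB p.2 z := pr_nonneg hμ _
        positivity
      have hext : ∑ p ∈ Vf.image e, pA p.1 z * pB p.2 z / pD z
          ≤ ∑ p ∈ W1 ×ˢ W2, pA p.1 z * pB p.2 z / pD z :=
        Finset.sum_le_sum_of_subset_of_nonneg hsub (fun p hp _ => hnn p hp)
      have hprod : ∑ p ∈ W1 ×ˢ W2, pA p.1 z * pB p.2 z / pD z
          = (∑ x ∈ W1, pA x z) * (∑ y ∈ W2, pB y z) / pD z := by
        rw [Finset.sum_mul_sum, Finset.sum_div]
        rw [Finset.sum_product]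
        apply Finset.sum_congr rfl
        intro x _
        rw [Finset.sum_div]
      have hA_le : ∑ x ∈ W1, pA x z ≤ pD z := by
        apply sum_pr_disjoint_le hμ W1 (fun x => {ω | X ω = x ∧ Z ω = z}) {ω | Z ω = z}
        · intro x _ y _ hxy ω hmem
          simp only [Set.mem_setOf_eq] at hmem ⊢
          intro hmem2
          exact hxy (hmem.1.symm.trans hmem2.1)
        · intro x _ ω hmem
          exact hmem.2
      have hB_le : ∑ y ∈ W2, pB y z ≤ pD z := by
        apply sum_pr_disjoint_le hμ W2 (fun y => {ω | Y ω = y ∧ Z ω = z}) {ω | Z ω = z}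
        · intro x _ y _ hxy ω hmem
          simp only [Set.mem_setOf_eq] at hmem ⊢
          intro hmem2
          exact hxy (hmem.1.symm.trans hmem2.1)
        · intro y _ ω hmem
          exact hmem.2
      have hA_nn : 0 ≤ ∑ x ∈ W1, pA x z :=
        Finset.sum_nonneg fun x _ => pr_nonneg hμ _
      have hB_nn : 0 ≤ ∑ y ∈ W2, pB y z :=
        Finset.sum_nonneg fun y _ => pr_nonneg hμ _
      calc ∑ p ∈ Vf.image e, pA p.1 z * pB p.2 z / pD z
          ≤ (∑ x ∈ W1, pA x z) * (∑ y ∈ W2, pB y z) / pD z := hext.trans_eq hprod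
        _ ≤ pD z * pD z / pD z := by
            have hmul : (∑ x ∈ W1, pA x z) * (∑ y ∈ W2, pB y z) ≤ pD z * pD z :=
              mul_le_mul hA_le hB_le hB_nn (le_of_lt hDz)
            rw [div_eq_mul_inv, div_eq_mul_inv]
            exact mul_le_mul_of_nonneg_right hmul (inv_nonneg.mpr (le_of_lt hDz))
        _ = pD z := by field_simp
    calc ∑ z ∈ Vz, ∑ v ∈ V.filter (fun v => v.2.2 = z),
          pA v.1 v.2.2 * pB v.2.1 v.2.2 / pD v.2.2
        ≤ ∑ z ∈ Vz, pD z := Finset.sum_le_sum inner_le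
      _ ≤ pr μ Set.univ := by
          apply sum_pr_disjoint_le hμ Vz (fun z => {ω | Z ω = z}) Set.univ
          · intro x _ y _ hxy ω hmem hmem2
            exact hxy (hmem.symm.trans hmem2)
          · intro z _ ω _
            trivial
      _ = 1 := pr_univ hμ
  calc ∑ ω ∈ S, μ ω * G (T ω)
      ≤ ∑ v ∈ V, pC v.1 v.2.1 v.2.2 * G v := step1
    _ ≤ ∑ v ∈ V, pA v.1 v.2.2 * pB v.2.1 v.2.2 / pD v.2.2 := step2
    _ ≤ 1 := step3

/-! ### derived entropy lemmas -/

lemma ent_const (hμ : IsPMF μ) {α : Type*} (a : α) : ent q μ (fun _ => a) = 0 := by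
  unfold ent
  have h : {ω' : Ω | a = a} = (Set.univ : Set Ω) := by ext; simp
  simp [h, pr_univ hμ]

lemma ent_pair_eq_of_aDet' (hμ : IsPMF μ) {α β : Type*} {X : Ω → α} {Y : Ω → β}
    (h : aDet μ Y X) :
    ent q μ (fun ω => (Y ω, X ω)) = ent q μ Y := by
  rw [ent_congr (Y := fun ω => (X ω, Y ω)) (fun ω' ω => by simp only [Prod.mk.injEq]; tauto)]
  exact ent_pair_eq_of_aDet hμ h

/-- conditional mutual information `I(X ; Y | Z)`. -/
def cmi (q : ℕ) (μ : Ω → ℝ) {α β γ : Type*} (X : Ω → α) (Y : Ω → β) (Z : Ω → γ) : ℝ :=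
  condEnt q μ X Z - condEnt q μ X (fun ω => (Y ω, Z ω))

lemma cmi_nonneg (hq : 1 < q) (hμ : IsPMF μ) {α β γ : Type*}
    (X : Ω → α) (Y : Ω → β) (Z : Ω → γ) : 0 ≤ cmi q μ X Y Z := by
  have h := ent_submod hq hμ X Y Z
  unfold cmi condEnt
  linarith

lemma condEnt_nonneg (hq : 1 < q) (hμ : IsPMF μ) {α β : Type*}
    (X : Ω → α) (Y : Ω → β) : 0 ≤ condEnt q μ X Y := by
  have h := cmi_nonneg hq hμ X X Y
  have h2 : condEnt q μ X (fun ω => (X ω, Y ω)) = 0 := by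
    unfold condEnt
    rw [ent_congr (X := fun ω => (X ω, X ω, Y ω)) (Y := fun ω => (X ω, Y ω))
      (fun ω' ω => by simp only [Prod.mk.injEq]; tauto)]
    ring
  unfold cmi at h
  linarith

lemma condEnt_zero_of_aDet (hμ : IsPMF μ) {α β : Type*} {X : Ω → α} {Y : Ω → β}
    (h : aDet μ Y X) : condEnt q μ X Y = 0 := by
  unfold condEnt
  rw [ent_pair_eq_of_aDet hμ h]
  ring

lemma condEnt_congr_iff {α β β' : Type*} {X : Ω → α} {Y : Ω → β} {Z : Ω → β'}
    (h : ∀ ω' ω, Y ω' = Y ω ↔ Z ω' = Z ω) : condEnt q μ X Y = condEnt q μ X Z := by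
  unfold condEnt
  rw [ent_congr h, ent_congr (X := fun ω => (X ω, Y ω)) (Y := fun ω => (X ω, Z ω))
    (fun ω' ω => by simp only [Prod.ext_iff]; rw [h ω' ω])]

lemma condEnt_congr_left {α α' β : Type*} {X : Ω → α} {X' : Ω → α'} {Y : Ω → β}
    (h : ∀ ω' ω, X ω' = X ω ↔ X' ω' = X' ω) : condEnt q μ X Y = condEnt q μ X' Y := by
  unfold condEnt
  rw [ent_congr (X := fun ω => (X ω, Y ω)) (Y := fun ω => (X' ω, Y ω))
    (fun ω' ω => by simp only [Prod.ext_iff]; rw [h ω' ω])]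

lemma condEnt_mono_right (hq : 1 < q) (hμ : IsPMF μ) {α β γ : Type*}
    {X : Ω → α} {Y : Ω → β} {Z : Ω → γ} (h : aDet μ Y Z) :
    condEnt q μ X Y ≤ condEnt q μ X Z := by
  have e1 : condEnt q μ X Y = condEnt q μ X (fun ω => (Z ω, Y ω)) := by
    unfold condEnt
    rw [ent_pair_eq_of_aDet hμ h]
    have hzd : aDet μ (fun ω => (X ω, Y ω)) Z := fun ω ω' hω hω' hxy =>
      h ω ω' hω hω' (congrArg Prod.snd hxy)
    have e2 : ent q μ (fun ω => (X ω, Z ω, Y ω))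
        = ent q μ (fun ω => (X ω, Y ω)) := by
      calc ent q μ (fun ω => (X ω, Z ω, Y ω))
          = ent q μ (fun ω => (Z ω, X ω, Y ω)) :=
            ent_congr (fun ω' ω => by simp only [Prod.mk.injEq]; tauto)
        _ = ent q μ (fun ω => (X ω, Y ω)) := ent_pair_eq_of_aDet hμ hzd
    rw [e2]
  rw [e1]
  have h2 := cmi_nonneg hq hμ X Y Z
  unfold cmi at h2
  have e3 : condEnt q μ X (fun ω => (Z ω, Y ω)) = condEnt q μ X (fun ω => (Y ω, Z ω)) :=
    condEnt_congr_iff (fun ω' ω => by simp only [Prod.mk.injEq]; tauto)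
  linarith

lemma condEnt_congr_right (hq : 1 < q) (hμ : IsPMF μ) {α β γ : Type*}
    {X : Ω → α} {Y : Ω → β} {Z : Ω → γ} (h1 : aDet μ Y Z) (h2 : aDet μ Z Y) :
    condEnt q μ X Y = condEnt q μ X Z := by
  have a1 : aDet μ Y Y := fun ω ω' _ _ h => h
  have a2 : aDet μ Z Z := fun ω ω' _ _ h => h
  exact le_antisymm (condEnt_mono_right hq hμ h1) (condEnt_mono_right hq hμ h2)

lemma condEnt_le_ent (hq : 1 < q) (hμ : IsPMF μ) {α β : Type*}
    (X : Ω → α) (Y : Ω → β) : condEnt q μ X Y ≤ ent q μ X := by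
  have e1 : ent q μ X = condEnt q μ X (fun _ => (0:ℕ)) := by
    unfold condEnt
    rw [ent_const hμ]
    rw [ent_congr (X := fun ω => (X ω, (0:ℕ))) (Y := X)
      (fun ω' ω => by simp [Prod.ext_iff])]
    ring
  rw [e1]
  exact condEnt_mono_right hq hμ (aDet_of_det fun ω ω' _ => rfl)

lemma condEnt_pair_chain {α β γ : Type*} (X : Ω → α) (Y : Ω → β) (Z : Ω → γ) :
    condEnt q μ (fun ω => (X ω, Y ω)) Z
      = condEnt q μ X Z + condEnt q μ Y (fun ω => (X ω, Z ω)) := by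
  unfold condEnt
  have e : ent q μ (fun ω => ((X ω, Y ω), Z ω)) = ent q μ (fun ω => (Y ω, X ω, Z ω)) :=
    ent_congr (fun ω' ω => by simp only [Prod.mk.injEq]; tauto)
  rw [e]
  ring

lemma cmi_comm {α β γ : Type*} (X : Ω → α) (Y : Ω → β) (Z : Ω → γ) :
    cmi q μ X Y Z = cmi q μ Y X Z := by
  unfold cmi condEnt
  have e : ent q μ (fun ω => (X ω, Y ω, Z ω)) = ent q μ (fun ω => (Y ω, X ω, Z ω)) :=
    ent_congr (fun ω' ω => by simp only [Prod.mk.injEq]; tauto)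
  rw [e]
  ring

lemma cmi_chain {α β β' γ : Type*} (X : Ω → α) (Y₁ : Ω → β) (Y₂ : Ω → β') (Z : Ω → γ) :
    cmi q μ X (fun ω => (Y₁ ω, Y₂ ω)) Z
      = cmi q μ X Y₁ Z + cmi q μ X Y₂ (fun ω => (Y₁ ω, Z ω)) := by
  unfold cmi
  have e : condEnt q μ X (fun ω => ((Y₁ ω, Y₂ ω), Z ω))
      = condEnt q μ X (fun ω => (Y₂ ω, Y₁ ω, Z ω)) :=
    condEnt_congr_iff (fun ω' ω => by simp only [Prod.mk.injEq]; tauto)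
  rw [e]
  ring

lemma cmi_le_left (hq : 1 < q) (hμ : IsPMF μ) {α β γ : Type*}
    (X : Ω → α) (Y : Ω → β) (Z : Ω → γ) : cmi q μ X Y Z ≤ condEnt q μ X Z := by
  have := condEnt_nonneg hq hμ X (fun ω => (Y ω, Z ω))
  unfold cmi
  linarith

lemma mutInf_eq_sub {α β : Type*} (X : Ω → α) (Y : Ω → β) :
    mutInf q μ X Y = ent q μ X - condEnt q μ X Y := by
  unfold mutInf condEnt
  ring

/-! ### zero conditional entropy = a.s. determination -/

lemma pr_empty : pr μ (∅ : Set Ω) = 0 := by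
  unfold pr; simp

open Real in
lemma aDet_of_condEnt_eq_zero (hq : 1 < q) (hμ : IsPMF μ) {α β : Type*}
    {X : Ω → α} {Y : Ω → β} (h : condEnt q μ X Y = 0) : aDet μ Y X := by
  classical
  have hq1 : (1:ℝ) < (q:ℝ) := by exact_mod_cast hq
  have hlq : 0 < Real.log q := Real.log_pos hq1
  have expand : condEnt q μ X Y = ∑ ω, (μ ω * logb q (pr μ {ω' | Y ω' = Y ω})
      - μ ω * logb q (pr μ {ω' | (X ω', Y ω') = (X ω, Y ω)})) := by
    unfold condEnt ent
    rw [Finset.sum_sub_distrib]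
    ring
  have hsub : ∀ ω : Ω, {ω' | (X ω', Y ω') = (X ω, Y ω)} ⊆ {ω' | Y ω' = Y ω} := by
    intro ω ω' hm
    simp only [Set.mem_setOf_eq, Prod.mk.injEq] at hm ⊢
    exact hm.2
  have hnn : ∀ ω ∈ (univ : Finset Ω),
      0 ≤ μ ω * logb q (pr μ {ω' | Y ω' = Y ω})
        - μ ω * logb q (pr μ {ω' | (X ω', Y ω') = (X ω, Y ω)}) := by
    intro ω _
    by_cases hω : μ ω = 0
    · simp [hω]
    · have p1 : 0 < pr μ {ω' | (X ω', Y ω') = (X ω, Y ω)} :=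
        pr_pos_of_mem hμ (by simp) hω
      have p2 : pr μ {ω' | (X ω', Y ω') = (X ω, Y ω)} ≤ pr μ {ω' | Y ω' = Y ω} :=
        pr_mono hμ (hsub ω)
      have hlb : logb q (pr μ {ω' | (X ω', Y ω') = (X ω, Y ω)})
          ≤ logb q (pr μ {ω' | Y ω' = Y ω}) := by
        unfold Real.logb
        exact div_le_div_of_nonneg_right (Real.log_le_log p1 p2) (le_of_lt hlq)
      have hμnn : 0 ≤ μ ω := hμ.nonneg ω
      nlinarith
  have hall : ∀ ω ∈ (univ : Finset Ω),
      μ ω * logb q (pr μ {ω' | Y ω' = Y ω})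
        - μ ω * logb q (pr μ {ω' | (X ω', Y ω') = (X ω, Y ω)}) = 0 := by
    have := (Finset.sum_eq_zero_iff_of_nonneg hnn).mp (by rw [← expand, h])
    exact this
  intro ω ω' hω hω' hYeq
  by_contra hne
  have hset : {a : Ω | (X a, Y a) = (X ω, Y ω)} = {a | X a = X ω ∧ Y a = Y ω} :=
    Set.ext fun a => by simp [Prod.ext_iff]
  have hterm := hall ω (Finset.mem_univ ω)
  rw [hset] at hterm
  have p1 : 0 < pr μ {a | X a = X ω ∧ Y a = Y ω} :=
    pr_pos_of_mem hμ (by simp) hω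
  have p2 : 0 < pr μ {a | Y a = Y ω} := pr_pos_of_mem hμ (by simp) hω
  have hlogeq : logb q (pr μ {a | Y a = Y ω}) = logb q (pr μ {a | X a = X ω ∧ Y a = Y ω}) := by
    rcases mul_eq_zero.mp (show μ ω * (logb q (pr μ {a | Y a = Y ω})
        - logb q (pr μ {a | X a = X ω ∧ Y a = Y ω})) = 0 by linarith) with h1 | h2
    · exact absurd h1 hω
    · linarith
  have hpeq : pr μ {a | Y a = Y ω} = pr μ {a | X a = X ω ∧ Y a = Y ω} := by
    have hlog : Real.log (pr μ {a | Y a = Y ω})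
        = Real.log (pr μ {a | X a = X ω ∧ Y a = Y ω}) := by
      unfold Real.logb at hlogeq
      field_simp at hlogeq
      exact hlogeq
    calc pr μ {a | Y a = Y ω} = Real.exp (Real.log (pr μ {a | Y a = Y ω})) :=
          (Real.exp_log p2).symm
      _ = Real.exp (Real.log (pr μ {a | X a = X ω ∧ Y a = Y ω})) := by rw [hlog]
      _ = pr μ {a | X a = X ω ∧ Y a = Y ω} := Real.exp_log p1
  have hlt : pr μ {a | X a = X ω ∧ Y a = Y ω} < pr μ {a | Y a = Y ω} := by
    rw [pr_eq_sum_filter, pr_eq_sum_filter]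
    apply Finset.sum_lt_sum_of_subset (i := ω')
    · intro a ha
      simp only [Finset.mem_filter, Finset.mem_univ, true_and, Set.mem_setOf_eq] at ha ⊢
      exact ha.2
    · simp only [Finset.mem_filter, Finset.mem_univ, true_and, Set.mem_setOf_eq]
      exact hYeq.symm
    · simp only [Finset.mem_filter, Finset.mem_univ, true_and, Set.mem_setOf_eq, not_and]
      intro hcon
      exact absurd hcon.symm hne
    · exact (hμ.nonneg ω').lt_of_ne (Ne.symm hω')
    · intro j _ _
      exact hμ.nonneg j
  linarith

lemma condEnt_eq_zero_iff (hq : 1 < q) (hμ : IsPMF μ) {α β : Type*}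
    {X : Ω → α} {Y : Ω → β} : condEnt q μ X Y = 0 ↔ aDet μ Y X :=
  ⟨aDet_of_condEnt_eq_zero hq hμ, condEnt_zero_of_aDet hμ⟩

/-! ### independence -/

lemma indepRV_symm {α β : Type*} {X : Ω → α} {Y : Ω → β} (h : IndepRV μ X Y) :
    IndepRV μ Y X := fun s t => by
  rw [Set.inter_comm, h t s, mul_comm]

lemma indepRV_comp {α β α' β' : Type*} {X : Ω → α} {Y : Ω → β} (h : IndepRV μ X Y)
    (f : α → α') (g : β → β') :
    IndepRV μ (fun ω => f (X ω)) (fun ω => g (Y ω)) := fun s t =>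
  h (f ⁻¹' s) (g ⁻¹' t)

open Real in
lemma ent_pair_of_indep (hμ : IsPMF μ) {α β : Type*} {X : Ω → α} {Y : Ω → β}
    (h : IndepRV μ X Y) :
    ent q μ (fun ω => (X ω, Y ω)) = ent q μ X + ent q μ Y := by
  unfold ent
  rw [← neg_add, ← Finset.sum_add_distrib]
  congr 1
  apply Finset.sum_congr rfl
  intro ω _
  by_cases hω : μ ω = 0
  · simp [hω]
  · have hfact : pr μ {ω' | (X ω', Y ω') = (X ω, Y ω)}
        = pr μ {ω' | X ω' = X ω} * pr μ {ω' | Y ω' = Y ω} := by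
      have hh := h {X ω} {Y ω}
      have e1 : X ⁻¹' {X ω} ∩ Y ⁻¹' {Y ω} = {ω' | (X ω', Y ω') = (X ω, Y ω)} := by
        ext ω'; simp [Prod.ext_iff]
      have e2 : X ⁻¹' {X ω} = {ω' | X ω' = X ω} := by ext ω'; simp
      have e3 : Y ⁻¹' {Y ω} = {ω' | Y ω' = Y ω} := by ext ω'; simp
      rw [e1, e2, e3] at hh
      exact hh
    have p1 : 0 < pr μ {ω' | X ω' = X ω} := pr_pos_of_mem hμ (by simp) hω
    have p2 : 0 < pr μ {ω' | Y ω' = Y ω} := pr_pos_of_mem hμ (by simp) hω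
    rw [hfact, Real.logb_mul (ne_of_gt p1) (ne_of_gt p2)]
    ring

lemma condEnt_of_indep (hμ : IsPMF μ) {α β : Type*} {X : Ω → α} {Y : Ω → β}
    (h : IndepRV μ X Y) : condEnt q μ X Y = ent q μ X := by
  unfold condEnt
  rw [ent_pair_of_indep hμ h]
  ring

/-! ### building independence from pointwise pmf factorization -/

lemma indepRV_of_pmf (hμ : IsPMF μ) {α β : Type*} {X : Ω → α} {Y : Ω → β}
    (h : ∀ ω₁ ω₂, pr μ {ω | X ω = X ω₁ ∧ Y ω = Y ω₂}
        = pr μ {ω | X ω = X ω₁} * pr μ {ω | Y ω = Y ω₂}) :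
    IndepRV μ X Y := by
  classical
  intro s t
  set P : Ω → α × β := fun ω => (X ω, Y ω) with hP
  set Sf : Finset Ω := univ.filter (fun ω => X ω ∈ s ∧ Y ω ∈ t) with hSf
  set V : Finset (α × β) := Sf.image P with hV
  set SX : Finset Ω := univ.filter (fun ω => X ω ∈ s) with hSX
  set SY : Finset Ω := univ.filter (fun ω => Y ω ∈ t) with hSY
  set VX : Finset α := SX.image X with hVX
  set VY : Finset β := SY.image Y with hVY
  have hjoint : pr μ (X ⁻¹' s ∩ Y ⁻¹' t) = ∑ ω ∈ Sf, μ ω := by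
    rw [pr_eq_sum_filter]
    apply Finset.sum_congr _ (fun _ _ => rfl)
    ext ω
    simp [hSf, Set.mem_preimage]
  have hprX : pr μ (X ⁻¹' s) = ∑ ω ∈ SX, μ ω := by
    rw [pr_eq_sum_filter]
    apply Finset.sum_congr _ (fun _ _ => rfl)
    ext ω
    simp [hSX, Set.mem_preimage]
  have hprY : pr μ (Y ⁻¹' t) = ∑ ω ∈ SY, μ ω := by
    rw [pr_eq_sum_filter]
    apply Finset.sum_congr _ (fun _ _ => rfl)
    ext ω
    simp [hSY, Set.mem_preimage]
  -- group the joint sum by the value of P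
  have hgroup : ∑ ω ∈ Sf, μ ω = ∑ v ∈ V, pr μ {ω | X ω = v.1 ∧ Y ω = v.2} := by
    rw [← Finset.sum_fiberwise_of_maps_to (fun ω hω => Finset.mem_image_of_mem P hω)
      (fun ω => μ ω)]
    apply Finset.sum_congr rfl
    intro v hv
    obtain ⟨ω₀, hω₀, hPω₀⟩ := Finset.mem_image.mp hv
    have hmem : ∀ ω, P ω = v → ω ∈ Sf := by
      intro ω hPω
      have h1 : X ω = v.1 := congrArg Prod.fst hPω
      have h2 : Y ω = v.2 := congrArg Prod.snd hPω
      have hx : X ω₀ ∈ s := (Finset.mem_filter.mp hω₀).2.1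
      have hy : Y ω₀ ∈ t := (Finset.mem_filter.mp hω₀).2.2
      have hx0 : X ω₀ = v.1 := congrArg Prod.fst hPω₀
      have hy0 : Y ω₀ = v.2 := congrArg Prod.snd hPω₀
      simp only [hSf, Finset.mem_filter, Finset.mem_univ, true_and]
      constructor
      · rw [h1, ← hx0]; exact hx
      · rw [h2, ← hy0]; exact hy
    rw [pr_eq_sum_filter]
    apply Finset.sum_congr _ (fun _ _ => rfl)
    ext ω
    constructor
    · intro hω
      rw [Finset.mem_filter] at hω
      rw [Finset.mem_filter]
      exact ⟨Finset.mem_univ ω, ⟨congrArg Prod.fst hω.2, congrArg Prod.snd hω.2⟩⟩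
    · intro hω
      rw [Finset.mem_filter] at hω
      have hPv : P ω = v := Prod.ext hω.2.1 hω.2.2
      rw [Finset.mem_filter]
      exact ⟨hmem ω hPv, hPv⟩
  -- marginal sums grouped by value
  have hgroupX : ∑ ω ∈ SX, μ ω = ∑ x ∈ VX, pr μ {ω | X ω = x} := by
    rw [← Finset.sum_fiberwise_of_maps_to (fun ω hω => Finset.mem_image_of_mem X hω)
      (fun ω => μ ω)]
    apply Finset.sum_congr rfl
    intro x hx
    obtain ⟨ω₀, hω₀, hXω₀⟩ := Finset.mem_image.mp hx
    rw [pr_eq_sum_filter]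
    apply Finset.sum_congr _ (fun _ _ => rfl)
    ext ω
    simp only [Finset.mem_filter, Finset.mem_univ, true_and, Set.mem_setOf_eq, hSX]
    constructor
    · rintro ⟨-, h2⟩; exact h2
    · intro h2
      refine ⟨?_, h2⟩
      rw [h2, ← hXω₀]
      exact (Finset.mem_filter.mp hω₀).2
  have hgroupY : ∑ ω ∈ SY, μ ω = ∑ y ∈ VY, pr μ {ω | Y ω = y} := by
    rw [← Finset.sum_fiberwise_of_maps_to (fun ω hω => Finset.mem_image_of_mem Y hω)
      (fun ω => μ ω)]
    apply Finset.sum_congr rfl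
    intro y hy
    obtain ⟨ω₀, hω₀, hYω₀⟩ := Finset.mem_image.mp hy
    rw [pr_eq_sum_filter]
    apply Finset.sum_congr _ (fun _ _ => rfl)
    ext ω
    simp only [Finset.mem_filter, Finset.mem_univ, true_and, Set.mem_setOf_eq, hSY]
    constructor
    · rintro ⟨-, h2⟩; exact h2
    · intro h2
      refine ⟨?_, h2⟩
      rw [h2, ← hYω₀]
      exact (Finset.mem_filter.mp hω₀).2
  -- factor each joint atom
  have hfac : ∑ v ∈ V, pr μ {ω | X ω = v.1 ∧ Y ω = v.2}
      = ∑ v ∈ V, pr μ {ω | X ω = v.1} * pr μ {ω | Y ω = v.2} := by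
    apply Finset.sum_congr rfl
    intro v hv
    obtain ⟨ω₀, hω₀, hPω₀⟩ := Finset.mem_image.mp hv
    have h1 : X ω₀ = v.1 := congrArg Prod.fst hPω₀
    have h2 : Y ω₀ = v.2 := congrArg Prod.snd hPω₀
    rw [← h1, ← h2]
    exact h ω₀ ω₀
  -- extend the sum over V to the full product VX ×ˢ VY
  have hsub : V ⊆ VX ×ˢ VY := by
    intro v hv
    obtain ⟨ω₀, hω₀, hPω₀⟩ := Finset.mem_image.mp hv
    have hx : X ω₀ ∈ s := (Finset.mem_filter.mp hω₀).2.1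
    have hy : Y ω₀ ∈ t := (Finset.mem_filter.mp hω₀).2.2
    rw [Finset.mem_product]
    constructor
    · rw [← congrArg Prod.fst hPω₀]
      exact Finset.mem_image_of_mem X (by simp [hSX, hx])
    · rw [← congrArg Prod.snd hPω₀]
      exact Finset.mem_image_of_mem Y (by simp [hSY, hy])
  have hext : ∑ v ∈ V, pr μ {ω | X ω = v.1} * pr μ {ω | Y ω = v.2}
      = ∑ v ∈ VX ×ˢ VY, pr μ {ω | X ω = v.1} * pr μ {ω | Y ω = v.2} := by
    apply Finset.sum_subset hsub
    intro v hvprod hvnot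
    obtain ⟨hv1, hv2⟩ := Finset.mem_product.mp hvprod
    obtain ⟨ω₁, hω₁, hXω₁⟩ := Finset.mem_image.mp hv1
    obtain ⟨ω₂, hω₂, hYω₂⟩ := Finset.mem_image.mp hv2
    have hempty : {ω | X ω = v.1 ∧ Y ω = v.2} = (∅ : Set Ω) := by
      ext ω
      simp only [Set.mem_setOf_eq, Set.mem_empty_iff_false, iff_false, not_and]
      intro hXω hYω
      apply hvnot
      have hωSf : ω ∈ Sf := by
        simp only [hSf, Finset.mem_filter, Finset.mem_univ, true_and]
        constructor
        · rw [hXω, ← hXω₁]; exact (Finset.mem_filter.mp hω₁).2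
        · rw [hYω, ← hYω₂]; exact (Finset.mem_filter.mp hω₂).2
      have : P ω = v := Prod.ext hXω hYω
      rw [← this]
      exact Finset.mem_image_of_mem P hωSf
    have := h ω₁ ω₂
    rw [hXω₁, hYω₂] at this
    rw [← this, hempty, pr_empty]
  have hprodsum : ∑ v ∈ VX ×ˢ VY, pr μ {ω | X ω = v.1} * pr μ {ω | Y ω = v.2}
      = (∑ x ∈ VX, pr μ {ω | X ω = x}) * (∑ y ∈ VY, pr μ {ω | Y ω = y}) := by
    rw [Finset.sum_mul_sum]
    rw [Finset.sum_product]
  rw [hjoint, hprX, hprY, hgroup, hfac, hext, hprodsum, hgroupX, hgroupY]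

/-! ### entropy depends only on the distribution -/

open Classical in
lemma pr_level_eq_sum {α : Type*} (X : Ω → α) (a : α) :
    pr μ (X ⁻¹' {a}) = ∑ ω ∈ univ.filter (fun ω => X ω = a), μ ω := by
  classical
  rw [pr_eq_sum_filter]
  apply Finset.sum_congr _ (fun _ _ => rfl)
  ext ω; simp

lemma exists_mem_of_pr_ne_zero {E : Set Ω} (h : pr μ E ≠ 0) : ∃ ω, ω ∈ E := by
  by_contra hc
  push_neg at hc
  apply h
  have : E = ∅ := Set.eq_empty_iff_forall_notMem.mpr hc
  rw [this, pr_empty]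

lemma sum_comp_identDist {α : Type*} {X Y : Ω → α} (hXY : IdentDist μ X Y) (G : α → ℝ) :
    ∑ ω, μ ω * G (X ω) = ∑ ω, μ ω * G (Y ω) := by
  classical
  have aux : ∀ Z : Ω → α, ∑ ω, μ ω * G (Z ω)
      = ∑ a ∈ univ.image Z, pr μ (Z ⁻¹' {a}) * G a := by
    intro Z
    rw [← Finset.sum_fiberwise_of_maps_to (g := Z) (t := univ.image Z)
      (fun ω _ => Finset.mem_image_of_mem Z (Finset.mem_univ ω)) (fun ω => μ ω * G (Z ω))]
    apply Finset.sum_congr rfl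
    intro a _
    rw [pr_level_eq_sum, Finset.sum_mul]
    apply Finset.sum_congr rfl
    intro ω hω
    rw [(Finset.mem_filter.mp hω).2]
  have hpr : ∀ a, pr μ (X ⁻¹' {a}) = pr μ (Y ⁻¹' {a}) := fun a => hXY {a}
  rw [aux X, aux Y]
  have hX2 : ∑ a ∈ univ.image X, pr μ (X ⁻¹' {a}) * G a
      = ∑ a ∈ (univ.image X).filter (fun a => pr μ (X ⁻¹' {a}) ≠ 0),
          pr μ (X ⁻¹' {a}) * G a := by
    symm
    apply Finset.sum_filter_of_ne
    intro a _ hne hpr0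
    exact hne (by rw [hpr0]; ring)
  have hY2 : ∑ a ∈ univ.image Y, pr μ (Y ⁻¹' {a}) * G a
      = ∑ a ∈ (univ.image Y).filter (fun a => pr μ (Y ⁻¹' {a}) ≠ 0),
          pr μ (Y ⁻¹' {a}) * G a := by
    symm
    apply Finset.sum_filter_of_ne
    intro a _ hne hpr0
    exact hne (by rw [hpr0]; ring)
  have hsets : (univ.image X).filter (fun a => pr μ (X ⁻¹' {a}) ≠ 0)
      = (univ.image Y).filter (fun a => pr μ (Y ⁻¹' {a}) ≠ 0) := by
    ext a
    simp only [Finset.mem_filter, Finset.mem_image, Finset.mem_univ, true_and]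
    constructor
    · rintro ⟨-, hne⟩
      have hne' : pr μ (Y ⁻¹' {a}) ≠ 0 := by rw [← hpr a]; exact hne
      obtain ⟨ω, hω⟩ := exists_mem_of_pr_ne_zero hne'
      exact ⟨⟨ω, hω⟩, hne'⟩
    · rintro ⟨-, hne⟩
      have hne' : pr μ (X ⁻¹' {a}) ≠ 0 := by rw [hpr a]; exact hne
      obtain ⟨ω, hω⟩ := exists_mem_of_pr_ne_zero hne'
      exact ⟨⟨ω, hω⟩, hne'⟩
  rw [hX2, hY2, hsets]
  apply Finset.sum_congr rfl
  intro a _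
  rw [hpr a]

open Real in
lemma ent_comp_identDist {α β : Type*} {X Y : Ω → α} (hXY : IdentDist μ X Y)
    (f : α → β) :
    ent q μ (fun ω => f (X ω)) = ent q μ (fun ω => f (Y ω)) := by
  unfold ent
  have e1 : ∀ (Z : Ω → α) (ω : Ω), {ω' | f (Z ω') = f (Z ω)} = Z ⁻¹' (f ⁻¹' {f (Z ω)}) := by
    intro Z ω; ext ω'; simp
  set G : α → ℝ := fun a => logb q (pr μ (X ⁻¹' (f ⁻¹' {f a}))) with hG
  have hGY : ∀ a, G a = logb q (pr μ (Y ⁻¹' (f ⁻¹' {f a}))) := fun a => by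
    rw [hG]; simp only; rw [hXY (f ⁻¹' {f a})]
  congr 1
  calc ∑ ω, μ ω * logb q (pr μ {ω' | f (X ω') = f (X ω)})
      = ∑ ω, μ ω * G (X ω) := by
        apply Finset.sum_congr rfl; intro ω _; rw [e1 X ω]
    _ = ∑ ω, μ ω * G (Y ω) := sum_comp_identDist hXY G
    _ = ∑ ω, μ ω * logb q (pr μ {ω' | f (Y ω') = f (Y ω)}) := by
        apply Finset.sum_congr rfl; intro ω _; rw [e1 Y ω, ← hGY (Y ω)]

lemma pr_comp_sum {γ : Type*} [Fintype γ] (V : Ω → γ) (E : Set γ)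
    [DecidablePred (· ∈ E)] [DecidableEq γ] :
    pr μ {ω | V ω ∈ E} = ∑ v ∈ univ.filter (· ∈ E), pr μ {ω | V ω = v} := by
  classical
  rw [pr_eq_sum_filter]
  rw [← Finset.sum_fiberwise_of_maps_to (g := V) (t := univ.filter (· ∈ E))
    (fun ω hω => by
      simp only [Finset.mem_filter, Finset.mem_univ, true_and] at hω ⊢
      exact hω) (fun ω => μ ω)]
  apply Finset.sum_congr rfl
  intro v hv
  have hvE : v ∈ E := by
    simpa using (Finset.mem_filter.mp hv).2
  rw [pr_eq_sum_filter]
  apply Finset.sum_congr _ (fun _ _ => rfl)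
  ext ω
  simp only [Finset.mem_filter, Finset.mem_univ, true_and, Set.mem_setOf_eq]
  constructor
  · rintro ⟨-, h2⟩; exact h2
  · intro h2
    exact ⟨by rw [h2]; exact hvE, h2⟩

lemma sum_pr_levels (hμ : IsPMF μ) {γ : Type*} [Fintype γ] (V : Ω → γ) :
    ∑ v : γ, pr μ {ω | V ω = v} = 1 := by
  classical
  have h := pr_comp_sum (μ := μ) V Set.univ
  have e1 : {ω : Ω | V ω ∈ Set.univ} = Set.univ := by ext; simp
  have e2 : ∑ v ∈ (univ : Finset γ).filter (· ∈ Set.univ), pr μ {ω | V ω = v}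
      = ∑ v : γ, pr μ {ω | V ω = v} :=
    Finset.sum_congr (by ext; simp) (fun _ _ => rfl)
  rw [e1, pr_univ hμ, e2] at h
  exact h.symm

lemma condEnt_diff_le (hq : 1 < q) (hμ : IsPMF μ) {α β γ : Type*}
    (X : Ω → α) (Y : Ω → β) (Z : Ω → γ) :
    condEnt q μ X Z - condEnt q μ X (fun ω => (Y ω, Z ω)) ≤ condEnt q μ Y Z := by
  have h1 := cmi_comm (q := q) (μ := μ) X Y Z
  have h2 := cmi_le_left hq hμ Y X Z
  unfold cmi at h1 h2
  linarith

lemma cmi_congr_mid {α β β' γ : Type*} {X : Ω → α} {Y : Ω → β} {Y' : Ω → β'} {Z : Ω → γ}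
    (h : ∀ ω' ω, Y ω' = Y ω ↔ Y' ω' = Y' ω) : cmi q μ X Y Z = cmi q μ X Y' Z := by
  unfold cmi
  rw [condEnt_congr_iff (X := X) (Y := fun ω => (Y ω, Z ω)) (Z := fun ω => (Y' ω, Z ω))
    (fun ω' ω => by simp only [Prod.ext_iff]; rw [h ω' ω])]

/-! ### scheme-specific lemmas -/

section SchemeLemmas

variable {q N K L : ℕ} {F : Type} [Field F] [Fintype F]

lemma Scheme.isPMF (S : Scheme q N K L F Ω) : IsPMF S.μ := ⟨S.μ_nonneg, S.μ_sum⟩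

lemma Scheme.one_lt_q (S : Scheme q N K L F Ω) : 1 < q :=
  S.card_F ▸ Fintype.one_lt_card

lemma Scheme.pr_Wm (S : Scheme q N K L F Ω) (m : Fin K) (v : Fin L → F) :
    pr S.μ {ω | S.W m ω = v} = ((q:ℝ) ^ L)⁻¹ := by
  classical
  have hq : 1 < q := S.one_lt_q
  have hq0 : (0:ℝ) < (q:ℝ)^L := by positivity
  set c : ℝ := (1 / (q:ℝ)^L)^K with hc
  set Fv : (Fin L → F) → Finset (Fin K → Fin L → F) :=
    fun v' => (univ : Finset (Fin K → Fin L → F)).filter (· ∈ {w | w m = v'}) with hFv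
  have hdec : ∀ v' : Fin L → F, pr S.μ {ω | S.W m ω = v'} = ((Fv v').card : ℝ) * c := by
    intro v'
    have e : {ω | S.W m ω = v'} = {ω | (fun k => S.W k ω) ∈ {w | w m = v'}} := rfl
    rw [e, pr_comp_sum]
    rw [Finset.sum_congr rfl (fun w _ => S.W_unif w)]
    rw [Finset.sum_const, nsmul_eq_mul]
  have hmem : ∀ (a b : Fin L → F) (w : Fin K → Fin L → F),
      w ∈ Fv a → Function.update w m b ∈ Fv b := by
    intro a b w hw
    simp only [hFv, Finset.mem_filter, Finset.mem_univ, true_and, Set.mem_setOf_eq]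
    simp
  have hinv : ∀ (a b : Fin L → F) (w : Fin K → Fin L → F),
      w ∈ Fv a → Function.update (Function.update w m b) m a = w := by
    intro a b w hw
    simp only [hFv, Finset.mem_filter, Finset.mem_univ, true_and, Set.mem_setOf_eq] at hw
    rw [Function.update_idem, ← hw]
    exact Function.update_eq_self m w
  have hcard : ∀ v₁ v₂ : Fin L → F, (Fv v₁).card = (Fv v₂).card := by
    intro v₁ v₂
    exact Finset.card_bij' (fun w _ => Function.update w m v₂)
      (fun w _ => Function.update w m v₁)
      (fun w hw => hmem v₁ v₂ w hw) (fun w hw => hmem v₂ v₁ w hw)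
      (fun w hw => hinv v₁ v₂ w hw) (fun w hw => hinv v₂ v₁ w hw)
  have hsum : ∑ v' : Fin L → F, pr S.μ {ω | S.W m ω = v'} = 1 :=
    sum_pr_levels S.isPMF _
  have hconst : ∑ v' : Fin L → F, pr S.μ {ω | S.W m ω = v'}
      = (Fintype.card (Fin L → F) : ℝ) * pr S.μ {ω | S.W m ω = v} := by
    rw [Finset.sum_congr rfl (fun v' _ => by rw [hdec v', hcard v' v, ← hdec v])]
    rw [Finset.sum_const, nsmul_eq_mul, Finset.card_univ]
  have hcardF : (Fintype.card (Fin L → F) : ℝ) = (q:ℝ)^L := by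
    rw [Fintype.card_fun, Fintype.card_fin, S.card_F]
    push_cast
    ring
  rw [hconst, hcardF] at hsum
  field_simp at hsum ⊢
  linarith

lemma Scheme.pr_Wrest (S : Scheme q N K L F Ω) (m : Fin K)
    (w' : {ℓ : Fin K // ℓ ≠ m} → Fin L → F) :
    pr S.μ {ω | (fun ℓ : {ℓ : Fin K // ℓ ≠ m} => S.W ℓ ω) = w'}
      = (q:ℝ)^L * (1 / (q:ℝ)^L)^K := by
  classical
  set E : Set (Fin K → Fin L → F) := {w | ∀ ℓ : {ℓ : Fin K // ℓ ≠ m}, w ℓ = w' ℓ} with hE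
  have e : {ω | (fun ℓ : {ℓ : Fin K // ℓ ≠ m} => S.W ℓ ω) = w'}
      = {ω | (fun k => S.W k ω) ∈ E} := by
    ext ω
    simp only [Set.mem_setOf_eq, hE, funext_iff]
  rw [e, pr_comp_sum]
  rw [Finset.sum_congr rfl (fun w hw => S.W_unif w)]
  rw [Finset.sum_const, nsmul_eq_mul]
  congr 1
  have hbij : ((univ : Finset (Fin K → Fin L → F)).filter (· ∈ E)).card
      = Fintype.card (Fin L → F) := by
    rw [← Finset.card_univ]
    apply Finset.card_bij' (fun w _ => w m)
      (fun v _ => fun ℓ => if h : ℓ = m then v else w' ⟨ℓ, h⟩)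
    · intro w hw
      exact Finset.mem_univ _
    · intro v hv
      simp only [Finset.mem_filter, Finset.mem_univ, true_and, hE, Set.mem_setOf_eq]
      intro ℓ
      rw [dif_neg ℓ.2]
    · intro w hw
      simp only [Finset.mem_filter, Finset.mem_univ, true_and, hE, Set.mem_setOf_eq] at hw
      funext ℓ
      by_cases h : ℓ = m
      · subst h; exact dif_pos rfl
      · rw [dif_neg h]
        exact (hw ⟨ℓ, h⟩).symm
    · intro v hv
      exact dif_pos rfl
  rw [hbij]
  rw [Fintype.card_fun, Fintype.card_fin, S.card_F]
  push_cast
  ring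

lemma Scheme.pr_W_split (S : Scheme q N K L F Ω) (m : Fin K) (v : Fin L → F)
    (w' : {ℓ : Fin K // ℓ ≠ m} → Fin L → F) :
    pr S.μ {ω | S.W m ω = v ∧ (fun ℓ : {ℓ : Fin K // ℓ ≠ m} => S.W ℓ ω) = w'}
      = pr S.μ {ω | S.W m ω = v}
        * pr S.μ {ω | (fun ℓ : {ℓ : Fin K // ℓ ≠ m} => S.W ℓ ω) = w'} := by
  classical
  have hq : 1 < q := S.one_lt_q
  have hq0 : (0:ℝ) < (q:ℝ)^L := by positivity
  set w₀ : Fin K → Fin L → F := fun ℓ => if h : ℓ = m then v else w' ⟨ℓ, h⟩ with hw₀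
  have e : {ω | S.W m ω = v ∧ (fun ℓ : {ℓ : Fin K // ℓ ≠ m} => S.W ℓ ω) = w'}
      = {ω | (fun k => S.W k ω) = w₀} := by
    ext ω
    simp only [Set.mem_setOf_eq, funext_iff, hw₀]
    constructor
    · rintro ⟨h1, h2⟩ ℓ
      by_cases h : ℓ = m
      · subst h; rw [dif_pos rfl]; exact h1
      · rw [dif_neg h]; exact h2 ⟨ℓ, h⟩
    · intro h
      constructor
      · have := h m; rw [dif_pos rfl] at this; exact this
      · intro ℓ
        have := h ℓ.1; rw [dif_neg ℓ.2] at this; exact this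
  rw [e, S.W_unif w₀, S.pr_Wm m v, S.pr_Wrest m w']
  field_simp

open Real in
lemma Scheme.ent_Wm (S : Scheme q N K L F Ω) (m : Fin K) :
    ent q S.μ (S.W m) = L := by
  have hq : 1 < q := S.one_lt_q
  have hq1 : (1:ℝ) < (q:ℝ) := by exact_mod_cast hq
  have hq0 : (0:ℝ) < (q:ℝ) := lt_trans one_pos hq1
  have hlogb : logb q (((q:ℝ)^L)⁻¹) = -(L:ℝ) := by
    rw [Real.logb, Real.log_inv, Real.log_pow]
    rw [neg_div]
    congr 1
    rw [mul_div_assoc]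
    rw [div_self (ne_of_gt (Real.log_pos hq1))]
    ring
  unfold ent
  rw [Finset.sum_congr rfl (fun ω _ => by rw [S.pr_Wm m (S.W m ω), hlogb])]
  rw [← Finset.sum_mul, S.μ_sum]
  ring

lemma Scheme.pr_factor (S : Scheme q N K L F Ω) (u : S.UT)
    (A : Set (Fin K → Fin L → F)) (s : Fin K → Set S.RT) :
    pr S.μ {ω | S.U ω = u ∧ ((fun k => S.W k ω) ∈ A ∧ ∀ k, S.R k ω ∈ s k)}
      = pr S.μ {ω | S.U ω = u}
        * (pr S.μ {ω | (fun k => S.W k ω) ∈ A} * ∏ k, pr S.μ {ω | S.R k ω ∈ s k}) := by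
  have h1 := S.U_indep {u}
    {p : (Fin K → Fin L → F) × (Fin K → S.RT) | p.1 ∈ A ∧ ∀ k, p.2 k ∈ s k}
  have h2 := S.R_indep s A
  have e1 : S.U ⁻¹' {u} ∩ (fun ω => ((fun k => S.W k ω), (fun k => S.R k ω))) ⁻¹'
      {p : (Fin K → Fin L → F) × (Fin K → S.RT) | p.1 ∈ A ∧ ∀ k, p.2 k ∈ s k}
      = {ω | S.U ω = u ∧ ((fun k => S.W k ω) ∈ A ∧ ∀ k, S.R k ω ∈ s k)} := by
    ext ω
    simp [Set.mem_preimage]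
  have e2 : S.U ⁻¹' {u} = {ω | S.U ω = u} := by ext; simp
  rw [e1, e2] at h1
  rw [h1]
  have e3 : (fun ω => ((fun k => S.W k ω), (fun k => S.R k ω))) ⁻¹'
      {p : (Fin K → Fin L → F) × (Fin K → S.RT) | p.1 ∈ A ∧ ∀ k, p.2 k ∈ s k}
      = {ω | (fun k => S.W k ω) ∈ A ∧ ∀ k, S.R k ω ∈ s k} := rfl
  rw [e3, h2]

lemma Scheme.pr_mem_univ (S : Scheme q N K L F Ω) {γ : Type*} (V : Ω → γ) :
    pr S.μ {ω | V ω ∈ (Set.univ : Set γ)} = 1 := by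
  have e : {ω : Ω | V ω ∈ (Set.univ : Set γ)} = Set.univ := by ext; simp
  rw [e, pr_univ S.isPMF]

/-- `R m` is independent of `(𝒬, all messages, all other randomness)`. -/
lemma Scheme.M1 (S : Scheme q N K L F Ω) (m : Fin K) :
    IndepRV S.μ (S.R m) (fun ω => (S.U ω, (fun k => S.W k ω),
      (fun ℓ : {ℓ : Fin K // ℓ ≠ m} => S.R ℓ ω))) := by
  classical
  apply indepRV_of_pmf S.isPMF
  intro ω₁ ω₂
  set r : S.RT := S.R m ω₁ with hr
  set u : S.UT := S.U ω₂ with hu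
  set w : Fin K → Fin L → F := fun k => S.W k ω₂ with hw
  set r' : {ℓ : Fin K // ℓ ≠ m} → S.RT := fun ℓ => S.R ℓ ω₂ with hr'
  set s : Fin K → Set S.RT := fun k => if h : k = m then {r} else {r' ⟨k, h⟩} with hs
  set s₂ : Fin K → Set S.RT :=
    fun k => if h : k = m then Set.univ else {r' ⟨k, h⟩} with hs₂
  -- joint event
  have ej : {ω | S.R m ω = S.R m ω₁ ∧ (S.U ω, (fun k => S.W k ω),
        (fun ℓ : {ℓ : Fin K // ℓ ≠ m} => S.R ℓ ω))
        = (S.U ω₂, (fun k => S.W k ω₂), (fun ℓ : {ℓ : Fin K // ℓ ≠ m} => S.R ℓ ω₂))}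
      = {ω | S.U ω = u ∧ ((fun k => S.W k ω) ∈ ({w} : Set _) ∧ ∀ k, S.R k ω ∈ s k)} := by
    ext ω
    simp only [Set.mem_setOf_eq, Prod.mk.injEq, Set.mem_singleton_iff, hs]
    constructor
    · rintro ⟨h1, h2, h3, h4⟩
      refine ⟨h2, h3, ?_⟩
      intro k
      by_cases h : k = m
      · subst h; rw [dif_pos rfl]; exact h1
      · rw [dif_neg h]
        exact Set.mem_singleton_iff.mpr (congrFun h4 ⟨k, h⟩)
    · rintro ⟨h2, h3, h4⟩
      refine ⟨?_, h2, h3, ?_⟩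
      · have := h4 m; rw [dif_pos rfl] at this; exact this
      · funext ℓ
        have := h4 ℓ.1; rw [dif_neg ℓ.2] at this; exact this
  -- marginal event for the tuple
  have em : {ω | (S.U ω, (fun k => S.W k ω), (fun ℓ : {ℓ : Fin K // ℓ ≠ m} => S.R ℓ ω))
        = (S.U ω₂, (fun k => S.W k ω₂), (fun ℓ : {ℓ : Fin K // ℓ ≠ m} => S.R ℓ ω₂))}
      = {ω | S.U ω = u ∧ ((fun k => S.W k ω) ∈ ({w} : Set _) ∧ ∀ k, S.R k ω ∈ s₂ k)} := by
    ext ω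
    simp only [Set.mem_setOf_eq, Prod.mk.injEq, Set.mem_singleton_iff, hs₂]
    constructor
    · rintro ⟨h2, h3, h4⟩
      refine ⟨h2, h3, ?_⟩
      intro k
      by_cases h : k = m
      · subst h; rw [dif_pos rfl]; trivial
      · rw [dif_neg h]
        exact Set.mem_singleton_iff.mpr (congrFun h4 ⟨k, h⟩)
    · rintro ⟨h2, h3, h4⟩
      refine ⟨h2, h3, ?_⟩
      funext ℓ
      have := h4 ℓ.1; rw [dif_neg ℓ.2] at this; exact this
  rw [ej, em, S.pr_factor u {w} s, S.pr_factor u {w} s₂]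
  -- split the products at m
  have hprod1 : ∏ k, pr S.μ {ω | S.R k ω ∈ s k}
      = pr S.μ {ω | S.R m ω = r} * ∏ k ∈ univ.erase m, pr S.μ {ω | S.R k ω ∈ s k} := by
    rw [← Finset.mul_prod_erase univ _ (Finset.mem_univ m)]
    congr 2
    ext ω
    simp [hs]
  have hprod2 : ∏ k, pr S.μ {ω | S.R k ω ∈ s₂ k}
      = ∏ k ∈ univ.erase m, pr S.μ {ω | S.R k ω ∈ s₂ k} := by
    rw [← Finset.mul_prod_erase univ _ (Finset.mem_univ m)]
    have : pr S.μ {ω | S.R m ω ∈ s₂ m} = 1 := by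
      have e : s₂ m = Set.univ := by rw [hs₂]; simp
      rw [e]
      exact S.pr_mem_univ _
    rw [this, one_mul]
  have hprern : ∀ k ∈ univ.erase m,
      pr S.μ {ω | S.R k ω ∈ s k} = pr S.μ {ω | S.R k ω ∈ s₂ k} := by
    intro k hk
    have hkm : k ≠ m := Finset.ne_of_mem_erase hk
    congr 2
    ext ω
    rw [hs, hs₂]
    simp only [dif_neg hkm]
  rw [hprod1, hprod2, Finset.prod_congr rfl hprern]
  have hrm : pr S.μ {ω | S.R m ω = r} = pr S.μ {ω | S.R m ω = S.R m ω₁} := rfl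
  rw [hrm]
  ring

/-- `(W m, R m)` is independent of `(𝒬, other messages, other randomness)`. -/
lemma Scheme.M2 (S : Scheme q N K L F Ω) (m : Fin K) :
    IndepRV S.μ (fun ω => (S.W m ω, S.R m ω))
      (fun ω => (S.U ω, (fun ℓ : {ℓ : Fin K // ℓ ≠ m} => S.W ℓ ω),
        (fun ℓ : {ℓ : Fin K // ℓ ≠ m} => S.R ℓ ω))) := by
  classical
  apply indepRV_of_pmf S.isPMF
  intro ω₁ ω₂
  set v : Fin L → F := S.W m ω₁ with hv
  set r : S.RT := S.R m ω₁ with hr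
  set u : S.UT := S.U ω₂ with hu
  set w' : {ℓ : Fin K // ℓ ≠ m} → Fin L → F := fun ℓ => S.W ℓ ω₂ with hw'
  set r' : {ℓ : Fin K // ℓ ≠ m} → S.RT := fun ℓ => S.R ℓ ω₂ with hr'
  set s : Fin K → Set S.RT := fun k => if h : k = m then {r} else {r' ⟨k, h⟩} with hs
  set s₂ : Fin K → Set S.RT :=
    fun k => if h : k = m then Set.univ else {r' ⟨k, h⟩} with hs₂
  set sm : Fin K → Set S.RT := fun k => if k = m then {r} else Set.univ with hsm
  set Aj : Set (Fin K → Fin L → F) :=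
    {w | w m = v ∧ ∀ ℓ : {ℓ : Fin K // ℓ ≠ m}, w ℓ = w' ℓ} with hAj
  set Av : Set (Fin K → Fin L → F) := {w | w m = v} with hAv
  set Ar : Set (Fin K → Fin L → F) :=
    {w | ∀ ℓ : {ℓ : Fin K // ℓ ≠ m}, w ℓ = w' ℓ} with hAr
  -- joint event
  have ej : {ω | (S.W m ω, S.R m ω) = (S.W m ω₁, S.R m ω₁)
        ∧ (S.U ω, (fun ℓ : {ℓ : Fin K // ℓ ≠ m} => S.W ℓ ω),
            (fun ℓ : {ℓ : Fin K // ℓ ≠ m} => S.R ℓ ω))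
          = (S.U ω₂, (fun ℓ : {ℓ : Fin K // ℓ ≠ m} => S.W ℓ ω₂),
            (fun ℓ : {ℓ : Fin K // ℓ ≠ m} => S.R ℓ ω₂))}
      = {ω | S.U ω = u ∧ ((fun k => S.W k ω) ∈ Aj ∧ ∀ k, S.R k ω ∈ s k)} := by
    ext ω
    simp only [Set.mem_setOf_eq, Prod.mk.injEq, hAj, hs]
    constructor
    · rintro ⟨⟨h1, h2⟩, h3, h4, h5⟩
      refine ⟨h3, ⟨h1, fun ℓ => congrFun h4 ℓ⟩, ?_⟩
      intro k
      by_cases h : k = m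
      · subst h; rw [dif_pos rfl]; exact h2
      · rw [dif_neg h]
        exact Set.mem_singleton_iff.mpr (congrFun h5 ⟨k, h⟩)
    · rintro ⟨h3, ⟨h1, h4⟩, h5⟩
      have h2 : S.R m ω = r := by
        have := h5 m; rw [dif_pos rfl] at this; exact this
      refine ⟨⟨h1, h2⟩, h3, funext h4, ?_⟩
      funext ℓ
      have := h5 ℓ.1; rw [dif_neg ℓ.2] at this; exact this
  -- marginal event for (W m, R m)
  have em1 : {ω | (S.W m ω, S.R m ω) = (S.W m ω₁, S.R m ω₁)}
      = {ω | (fun k => S.W k ω) ∈ Av ∧ ∀ k, S.R k ω ∈ sm k} := by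
    ext ω
    simp only [Set.mem_setOf_eq, Prod.mk.injEq, hAv, hsm]
    constructor
    · rintro ⟨h1, h2⟩
      refine ⟨h1, ?_⟩
      intro k
      by_cases h : k = m
      · subst h; rw [if_pos rfl]; exact h2
      · rw [if_neg h]; trivial
    · rintro ⟨h1, h2⟩
      have := h2 m; rw [if_pos rfl] at this
      exact ⟨h1, this⟩
  -- marginal event for the conditioner tuple
  have em2 : {ω | (S.U ω, (fun ℓ : {ℓ : Fin K // ℓ ≠ m} => S.W ℓ ω),
            (fun ℓ : {ℓ : Fin K // ℓ ≠ m} => S.R ℓ ω))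
          = (S.U ω₂, (fun ℓ : {ℓ : Fin K // ℓ ≠ m} => S.W ℓ ω₂),
            (fun ℓ : {ℓ : Fin K // ℓ ≠ m} => S.R ℓ ω₂))}
      = {ω | S.U ω = u ∧ ((fun k => S.W k ω) ∈ Ar ∧ ∀ k, S.R k ω ∈ s₂ k)} := by
    ext ω
    simp only [Set.mem_setOf_eq, Prod.mk.injEq, hAr, hs₂]
    constructor
    · rintro ⟨h3, h4, h5⟩
      refine ⟨h3, fun ℓ => congrFun h4 ℓ, ?_⟩
      intro k
      by_cases h : k = m
      · subst h; rw [dif_pos rfl]; trivial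
      · rw [dif_neg h]
        exact Set.mem_singleton_iff.mpr (congrFun h5 ⟨k, h⟩)
    · rintro ⟨h3, h4, h5⟩
      refine ⟨h3, funext h4, ?_⟩
      funext ℓ
      have := h5 ℓ.1; rw [dif_neg ℓ.2] at this; exact this
  rw [ej, em1, em2, S.pr_factor u Aj s, S.pr_factor u Ar s₂, S.R_indep sm Av]
  -- split products at m
  have hprod1 : ∏ k, pr S.μ {ω | S.R k ω ∈ s k}
      = pr S.μ {ω | S.R m ω ∈ ({r} : Set S.RT)}
        * ∏ k ∈ univ.erase m, pr S.μ {ω | S.R k ω ∈ s k} := by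
    rw [← Finset.mul_prod_erase univ _ (Finset.mem_univ m)]
    congr 2
    ext ω
    simp [hs]
  have hprod2 : ∏ k, pr S.μ {ω | S.R k ω ∈ s₂ k}
      = ∏ k ∈ univ.erase m, pr S.μ {ω | S.R k ω ∈ s₂ k} := by
    rw [← Finset.mul_prod_erase univ _ (Finset.mem_univ m)]
    have e : pr S.μ {ω | S.R m ω ∈ s₂ m} = 1 := by
      have e2 : s₂ m = Set.univ := by rw [hs₂]; simp
      rw [e2]
      exact S.pr_mem_univ _
    rw [e, one_mul]
  have hprod3 : ∏ k, pr S.μ {ω | S.R k ω ∈ sm k}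
      = pr S.μ {ω | S.R m ω ∈ ({r} : Set S.RT)} := by
    rw [← Finset.mul_prod_erase univ _ (Finset.mem_univ m)]
    have e : ∀ k ∈ univ.erase m, pr S.μ {ω | S.R k ω ∈ sm k} = 1 := by
      intro k hk
      have hkm : k ≠ m := Finset.ne_of_mem_erase hk
      have e2 : sm k = Set.univ := by rw [hsm]; simp [hkm]
      rw [e2]
      exact S.pr_mem_univ _
    rw [Finset.prod_congr rfl e, Finset.prod_const_one, mul_one]
    congr 2
    ext ω
    simp [hsm]
  have hprern : ∀ k ∈ univ.erase m,
      pr S.μ {ω | S.R k ω ∈ s k} = pr S.μ {ω | S.R k ω ∈ s₂ k} := by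
    intro k hk
    have hkm : k ≠ m := Finset.ne_of_mem_erase hk
    congr 2
    ext ω
    rw [hs, hs₂]
    simp only [dif_neg hkm]
  -- the W-factorization
  have hWfac : pr S.μ {ω | (fun k => S.W k ω) ∈ Aj}
      = pr S.μ {ω | (fun k => S.W k ω) ∈ Av} * pr S.μ {ω | (fun k => S.W k ω) ∈ Ar} := by
    have e1 : {ω | (fun k => S.W k ω) ∈ Aj}
        = {ω | S.W m ω = v ∧ (fun ℓ : {ℓ : Fin K // ℓ ≠ m} => S.W ℓ ω) = w'} := by
      ext ω
      simp only [Set.mem_setOf_eq, hAj, funext_iff]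
    have e2 : {ω | (fun k => S.W k ω) ∈ Av} = {ω | S.W m ω = v} := rfl
    have e3 : {ω | (fun k => S.W k ω) ∈ Ar}
        = {ω | (fun ℓ : {ℓ : Fin K // ℓ ≠ m} => S.W ℓ ω) = w'} := by
      ext ω
      simp only [Set.mem_setOf_eq, hAr, funext_iff]
    rw [e1, e2, e3]
    exact S.pr_W_split m v w'
  rw [hprod1, hprod2, hprod3, Finset.prod_congr rfl hprern, hWfac]
  ring

/-- the "everything except edge `m`" conditioning tuple `D = (𝒬, W_{\bar m}, R_{\bar m})`. -/
def Scheme.DD (S : Scheme q N K L F Ω) (m : Fin K) :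
    Ω → S.UT × ({ℓ : Fin K // ℓ ≠ m} → Fin L → F) × ({ℓ : Fin K // ℓ ≠ m} → S.RT) :=
  fun ω => (S.U ω, fun ℓ => S.W ℓ ω, fun ℓ => S.R ℓ ω)

/-- the per-server tuple `T = (Q_n, 𝒲_n∖W_m, ℛ_n∖R_m)` at desired index `k`. -/
def Scheme.TT (S : Scheme q N K L F Ω) (n : Fin N) (m k : Fin K) :
    Ω → S.QT × ({ℓ : Fin K // (S.e1 ℓ = n ∨ S.e2 ℓ = n) ∧ ℓ ≠ m} → Fin L → F)
      × ({ℓ : Fin K // (S.e1 ℓ = n ∨ S.e2 ℓ = n) ∧ ℓ ≠ m} → S.RT) :=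
  fun ω => (S.Q n k ω, fun ℓ => S.W ℓ ω, fun ℓ => S.R ℓ ω)

lemma Scheme.aDet_Q (S : Scheme q N K L F Ω) (n : Fin N) (k : Fin K) :
    aDet S.μ S.U (S.Q n k) := by
  have h := aDet_of_condEnt_eq_zero S.one_lt_q S.isPMF (S.query_det k)
  exact fun ω ω' hω hω' hu => congrFun (h ω ω' hω hω' hu) n

lemma Scheme.aDet_A (S : Scheme q N K L F Ω) (n : Fin N) (k : Fin K) :
    aDet S.μ (fun ω => (S.Q n k ω,
      (fun j : {j : Fin K // S.e1 j = n ∨ S.e2 j = n} => S.W j ω),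
      (fun j : {j : Fin K // S.e1 j = n ∨ S.e2 j = n} => S.R j ω))) (S.A n k) :=
  aDet_of_condEnt_eq_zero S.one_lt_q S.isPMF (S.answer_det n k)

/-- Part 1 : the answer of any server holding edge `m` has entropy at least `H(R_m)`,
for every desired index `k`. -/
lemma Scheme.server_bound (S : Scheme q N K L F Ω) (m : Fin K) (n : Fin N)
    (hn : S.e1 m = n ∨ S.e2 m = n) (k : Fin K) :
    ent q S.μ (S.R m) ≤ condEnt q S.μ (S.A n k) S.U := by
  have hq : 1 < q := S.one_lt_q
  have hP : IsPMF S.μ := S.isPMF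
  set μ := S.μ
  set Y₁ : Ω → S.UT × (Fin K → Fin L → F) × ({ℓ : Fin K // ℓ ≠ m} → S.RT) :=
    fun ω => (S.U ω, (fun k' => S.W k' ω), (fun ℓ : {ℓ : Fin K // ℓ ≠ m} => S.R ℓ ω))
    with hY₁
  have hs1 : condEnt q μ (S.A n k) Y₁ ≤ condEnt q μ (S.A n k) S.U :=
    condEnt_mono_right hq hP (aDet_of_det fun ω ω' h => congrArg Prod.fst h)
  have hs3 : condEnt q μ (S.R m) Y₁ = ent q μ (S.R m) :=
    condEnt_of_indep hP (S.M1 m)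
  set C : Ω → S.AT × (S.UT × (Fin K → Fin L → F) × ({ℓ : Fin K // ℓ ≠ m} → S.RT)) :=
    fun ω => (S.A n k ω, Y₁ ω) with hC
  have hC_A : aDet μ C (S.A n k) := aDet_of_det fun ω ω' h => congrArg Prod.fst h
  have hC_U : aDet μ C S.U := aDet_of_det fun ω ω' h => congrArg (fun p => p.2.1) h
  have hC_W : aDet μ C (fun ω => (fun k' => S.W k' ω)) :=
    aDet_of_det fun ω ω' h => congrArg (fun p => p.2.2.1) h
  have hC_Ro : aDet μ C (fun ω => (fun ℓ : {ℓ : Fin K // ℓ ≠ m} => S.R ℓ ω)) :=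
    aDet_of_det fun ω ω' h => congrArg (fun p => p.2.2.2) h
  have hC_Q : aDet μ C (S.Q n k) := aDet_trans hC_U (S.aDet_Q n k)
  have hC_Wn : aDet μ C (fun ω => (fun j : {j : Fin K // S.e1 j = n ∨ S.e2 j = n} =>
      S.W j ω)) := fun ω ω' hω hω' hc =>
    funext fun j => congrFun (hC_W ω ω' hω hω' hc) j.1
  have hC_Rn : aDet μ C (fun ω =>
      (fun m' : {m' : Fin K // (S.e1 m' = n ∨ S.e2 m' = n) ∧ m' ≠ m} => S.R m' ω)) :=
    fun ω ω' hω hω' hc =>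
      funext fun m' => congrFun (hC_Ro ω ω' hω hω' hc) ⟨m'.1, m'.2.2⟩
  have hRR : aDet μ (fun ω => (S.A n k ω,
      (fun j : {j : Fin K // S.e1 j = n ∨ S.e2 j = n} => S.W j ω),
      (fun m' : {m' : Fin K // (S.e1 m' = n ∨ S.e2 m' = n) ∧ m' ≠ m} => S.R m' ω),
      S.Q n k ω)) (S.R m) :=
    aDet_of_condEnt_eq_zero hq hP (S.rand_recov k m n hn)
  have hC_Zrr : aDet μ C (fun ω => (S.A n k ω,
      (fun j : {j : Fin K // S.e1 j = n ∨ S.e2 j = n} => S.W j ω),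
      (fun m' : {m' : Fin K // (S.e1 m' = n ∨ S.e2 m' = n) ∧ m' ≠ m} => S.R m' ω),
      S.Q n k ω)) :=
    aDet_pair hC_A (aDet_pair hC_Wn (aDet_pair hC_Rn hC_Q))
  have hs4 : condEnt q μ (S.R m) C = 0 :=
    condEnt_zero_of_aDet hP (aDet_trans hC_Zrr hRR)
  have hdiff := condEnt_diff_le hq hP (S.R m) (S.A n k) Y₁
  have hC_eq : condEnt q μ (S.R m) (fun ω => (S.A n k ω, Y₁ ω)) = 0 := hs4
  linarith

/-- database privacy + reliability : at desired index `k₀ ≠ m`, the answer of a server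
holding edge `m`, together with its query and all its other data, is independent of
`W m`. -/
lemma Scheme.db_step (S : Scheme q N K L F Ω) (m : Fin K) (n : Fin N)
    (k₀ : Fin K) (hk₀ : k₀ ≠ m) :
    condEnt q S.μ (S.W m) (fun ω => (S.A n k₀ ω, S.TT n m k₀ ω))
      = ent q S.μ (S.W m) := by
  have hq : 1 < q := S.one_lt_q
  have hP : IsPMF S.μ := S.isPMF
  set J : Set (Fin K) := {m} with hJ
  have hk₀J : k₀ ∉ J := by simp [hJ, hk₀]
  set E' : Ω → (Fin N → S.AT) × (Fin N → S.QT) × ({ℓ : Fin K // ℓ ∉ J} → S.RT)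
      × ({ℓ : Fin K // ℓ ∉ J ∧ ℓ ≠ k₀} → Fin L → F) × S.UT :=
    fun ω => ((fun n' : Fin N => S.A n' k₀ ω), (fun n' : Fin N => S.Q n' k₀ ω),
      (fun ℓ : {ℓ : Fin K // ℓ ∉ J} => S.R ℓ ω),
      (fun ℓ : {ℓ : Fin K // ℓ ∉ J ∧ ℓ ≠ k₀} => S.W ℓ ω), S.U ω) with hE'
  have hWiff : ∀ ω' ω : Ω, (fun j : J => S.W j ω') = (fun j : J => S.W j ω)
      ↔ S.W m ω' = S.W m ω := by
    intro ω' ω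
    constructor
    · intro h
      exact congrFun h ⟨m, rfl⟩
    · intro h
      funext j'
      have hj : (j' : Fin K) = m := j'.2
      rw [hj]
      exact h
  have hdb2 : condEnt q S.μ (S.W m) E' = ent q S.μ (S.W m) := by
    have h1 : mutInf q S.μ (fun ω => fun j' : J => S.W j' ω) E' = 0 := S.db_privacy k₀ J hk₀J
    rw [mutInf_eq_sub] at h1
    have h2 : condEnt q S.μ (fun ω => fun j' : J => S.W j' ω) E'
        = condEnt q S.μ (S.W m) E' := condEnt_congr_left hWiff
    have h3 : ent q S.μ (fun ω => fun j' : J => S.W j' ω) = ent q S.μ (S.W m) :=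
      ent_congr hWiff
    linarith
  have hrel : aDet S.μ (fun ω => ((fun n' : Fin N => S.A n' k₀ ω), S.U ω)) (S.W k₀) :=
    aDet_of_condEnt_eq_zero hq hP (S.reliability k₀)
  have hE'A : aDet S.μ E' (fun ω => (fun n' : Fin N => S.A n' k₀ ω)) :=
    aDet_of_det fun ω ω' h => congrArg Prod.fst h
  have hE'U : aDet S.μ E' S.U :=
    aDet_of_det fun ω ω' h => congrArg (fun p => p.2.2.2.2) h
  have hE'W : aDet S.μ E' (S.W k₀) := aDet_trans (aDet_pair hE'A hE'U) hrel
  have hWE' : condEnt q S.μ (S.W m) (fun ω => (S.W k₀ ω, E' ω))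
      = condEnt q S.μ (S.W m) E' :=
    condEnt_congr_right hq hP
      (aDet_of_det fun ω ω' h => congrArg Prod.snd h)
      (aDet_pair hE'W (fun ω ω' _ _ h => h))
  have hdetT : aDet S.μ (fun ω => (S.W k₀ ω, E' ω))
      (fun ω => (S.A n k₀ ω, S.TT n m k₀ ω)) := by
    intro ω ω' hω hω' h
    have hWk : S.W k₀ ω = S.W k₀ ω' := congrArg Prod.fst h
    have hE : E' ω = E' ω' := congrArg Prod.snd h
    have hA : (fun n' : Fin N => S.A n' k₀ ω) = (fun n' => S.A n' k₀ ω') :=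
      congrArg Prod.fst hE
    have hQ : (fun n' : Fin N => S.Q n' k₀ ω) = (fun n' => S.Q n' k₀ ω') :=
      congrArg (fun p => p.2.1) hE
    have hR : (fun ℓ : {ℓ : Fin K // ℓ ∉ J} => S.R ℓ ω)
        = (fun ℓ : {ℓ : Fin K // ℓ ∉ J} => S.R ℓ ω') := congrArg (fun p => p.2.2.1) hE
    have hW : (fun ℓ : {ℓ : Fin K // ℓ ∉ J ∧ ℓ ≠ k₀} => S.W ℓ ω)
        = (fun ℓ : {ℓ : Fin K // ℓ ∉ J ∧ ℓ ≠ k₀} => S.W ℓ ω') :=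
      congrArg (fun p => p.2.2.2.1) hE
    have hJmem : ∀ ℓ : Fin K, ℓ ≠ m → ℓ ∉ J := by
      intro ℓ hℓ
      simp [hJ, hℓ]
    simp only [Prod.mk.injEq]
    refine ⟨congrFun hA n, ?_⟩
    unfold Scheme.TT
    simp only [Prod.mk.injEq]
    refine ⟨congrFun hQ n, ?_, ?_⟩
    · funext ℓ
      by_cases hℓ : ℓ.1 = k₀
      · rw [hℓ]
        exact hWk
      · exact congrFun hW ⟨ℓ.1, hJmem ℓ.1 ℓ.2.2, hℓ⟩
    · funext ℓ
      exact congrFun hR ⟨ℓ.1, hJmem ℓ.1 ℓ.2.2⟩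
  have hmono : condEnt q S.μ (S.W m) (fun ω => (S.W k₀ ω, E' ω))
      ≤ condEnt q S.μ (S.W m) (fun ω => (S.A n k₀ ω, S.TT n m k₀ ω)) :=
    condEnt_mono_right hq hP hdetT
  have hle : condEnt q S.μ (S.W m) (fun ω => (S.A n k₀ ω, S.TT n m k₀ ω))
      ≤ ent q S.μ (S.W m) := condEnt_le_ent hq hP _ _
  linarith

/-- user privacy : the per-server conditional entropy of `W m` given the server's
answer and data does not depend on the desired index. -/
lemma Scheme.transfer (S : Scheme q N K L F Ω) (m : Fin K) (n : Fin N)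
    (hn : S.e1 m = n ∨ S.e2 m = n) (k k' : Fin K) :
    condEnt q S.μ (S.W m) (fun ω => (S.A n k ω, S.TT n m k ω))
      = condEnt q S.μ (S.W m) (fun ω => (S.A n k' ω, S.TT n m k' ω)) := by
  have huser := S.user_privacy n k k'
  set f : S.QT × S.AT × ({j : Fin K // S.e1 j = n ∨ S.e2 j = n} → Fin L → F)
      × ({j : Fin K // S.e1 j = n ∨ S.e2 j = n} → S.RT)
      → S.AT × S.QT × ({ℓ : Fin K // (S.e1 ℓ = n ∨ S.e2 ℓ = n) ∧ ℓ ≠ m} → Fin L → F)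
        × ({ℓ : Fin K // (S.e1 ℓ = n ∨ S.e2 ℓ = n) ∧ ℓ ≠ m} → S.RT) :=
    fun p => (p.2.1, p.1, (fun ℓ => p.2.2.1 ⟨ℓ.1, ℓ.2.1⟩),
      (fun ℓ => p.2.2.2 ⟨ℓ.1, ℓ.2.1⟩)) with hf
  set g : S.QT × S.AT × ({j : Fin K // S.e1 j = n ∨ S.e2 j = n} → Fin L → F)
      × ({j : Fin K // S.e1 j = n ∨ S.e2 j = n} → S.RT)
      → (Fin L → F) × S.AT × S.QT
        × ({ℓ : Fin K // (S.e1 ℓ = n ∨ S.e2 ℓ = n) ∧ ℓ ≠ m} → Fin L → F)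
        × ({ℓ : Fin K // (S.e1 ℓ = n ∨ S.e2 ℓ = n) ∧ ℓ ≠ m} → S.RT) :=
    fun p => (p.2.2.1 ⟨m, hn⟩, f p) with hg
  unfold condEnt
  have e1 : ent q S.μ (fun ω => (S.W m ω, (S.A n k ω, S.TT n m k ω)))
      = ent q S.μ (fun ω => (S.W m ω, (S.A n k' ω, S.TT n m k' ω))) :=
    ent_comp_identDist huser g
  have e2 : ent q S.μ (fun ω => (S.A n k ω, S.TT n m k ω))
      = ent q S.μ (fun ω => (S.A n k' ω, S.TT n m k' ω)) :=
    ent_comp_identDist huser f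
  rw [e1, e2]

/-- key step : at desired index `m`, the answer of a single server holding edge `m`,
together with everything except `(W m, R m)`, reveals nothing about `W m`. -/
lemma Scheme.dagger (S : Scheme q N K L F Ω) (m : Fin K) (n : Fin N)
    (hn : S.e1 m = n ∨ S.e2 m = n) (k₀ : Fin K) (hk₀ : k₀ ≠ m) :
    condEnt q S.μ (S.W m) (fun ω => (S.A n m ω, S.DD m ω)) = ent q S.μ (S.W m) := by
  have hq : 1 < q := S.one_lt_q
  have hP : IsPMF S.μ := S.isPMF
  have hu : condEnt q S.μ (S.W m) (fun ω => (S.A n m ω, S.TT n m m ω))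
      = ent q S.μ (S.W m) :=
    (S.transfer m n hn m k₀).trans (S.db_step m n k₀ hk₀)
  -- determinations out of `D`
  have hD_U : aDet S.μ (S.DD m) S.U := aDet_of_det fun ω ω' h => congrArg Prod.fst h
  have hD_Wo : aDet S.μ (S.DD m) (fun ω => (fun ℓ : {ℓ : Fin K // ℓ ≠ m} => S.W ℓ ω)) :=
    aDet_of_det fun ω ω' h => congrArg (fun p => p.2.1) h
  have hD_Ro : aDet S.μ (S.DD m) (fun ω => (fun ℓ : {ℓ : Fin K // ℓ ≠ m} => S.R ℓ ω)) :=
    aDet_of_det fun ω ω' h => congrArg (fun p => p.2.2) h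
  have hD_Q : aDet S.μ (S.DD m) (S.Q n m) := aDet_trans hD_U (S.aDet_Q n m)
  have hD_T : aDet S.μ (S.DD m) (S.TT n m m) := by
    intro ω ω' hω hω' h
    unfold Scheme.TT
    simp only [Prod.mk.injEq]
    refine ⟨hD_Q ω ω' hω hω' h, ?_, ?_⟩
    · funext ℓ
      exact congrFun (hD_Wo ω ω' hω hω' h) ⟨ℓ.1, ℓ.2.2⟩
    · funext ℓ
      exact congrFun (hD_Ro ω ω' hω hω' h) ⟨ℓ.1, ℓ.2.2⟩
  -- answers are determined by `((W m, R m), T)`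
  have hdetA : aDet S.μ (fun ω => ((S.W m ω, S.R m ω), S.TT n m m ω)) (S.A n m) := by
    have hstep : aDet S.μ (fun ω => ((S.W m ω, S.R m ω), S.TT n m m ω))
        (fun ω => (S.Q n m ω,
          (fun j' : {j' : Fin K // S.e1 j' = n ∨ S.e2 j' = n} => S.W j' ω),
          (fun j' : {j' : Fin K // S.e1 j' = n ∨ S.e2 j' = n} => S.R j' ω))) := by
      intro ω ω' hω hω' h
      have hV : (S.W m ω, S.R m ω) = (S.W m ω', S.R m ω') := congrArg Prod.fst h
      have hT : S.TT n m m ω = S.TT n m m ω' := congrArg Prod.snd h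
      have hWm : S.W m ω = S.W m ω' := congrArg Prod.fst hV
      have hRm : S.R m ω = S.R m ω' := congrArg Prod.snd hV
      have hQ : S.Q n m ω = S.Q n m ω' := congrArg Prod.fst hT
      have hWo : (fun ℓ : {ℓ : Fin K // (S.e1 ℓ = n ∨ S.e2 ℓ = n) ∧ ℓ ≠ m} => S.W ℓ ω)
          = (fun ℓ : {ℓ : Fin K // (S.e1 ℓ = n ∨ S.e2 ℓ = n) ∧ ℓ ≠ m} => S.W ℓ ω') :=
        congrArg (fun p => p.2.1) hT
      have hRo : (fun ℓ : {ℓ : Fin K // (S.e1 ℓ = n ∨ S.e2 ℓ = n) ∧ ℓ ≠ m} => S.R ℓ ω)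
          = (fun ℓ : {ℓ : Fin K // (S.e1 ℓ = n ∨ S.e2 ℓ = n) ∧ ℓ ≠ m} => S.R ℓ ω') :=
        congrArg (fun p => p.2.2) hT
      simp only [Prod.mk.injEq]
      refine ⟨hQ, ?_, ?_⟩
      · funext j'
        by_cases hj : j'.1 = m
        · rw [hj]; exact hWm
        · exact congrFun hWo ⟨j'.1, j'.2, hj⟩
      · funext j'
        by_cases hj : j'.1 = m
        · rw [hj]; exact hRm
        · exact congrFun hRo ⟨j'.1, j'.2, hj⟩
    exact aDet_trans hstep (S.aDet_A n m)
  -- congruence : H(Wm | (A, D)) = H(Wm | (D, (A, T)))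
  have hcong1 : condEnt q S.μ (S.W m) (fun ω => (S.A n m ω, S.DD m ω))
      = condEnt q S.μ (S.W m) (fun ω => (S.DD m ω, (S.A n m ω, S.TT n m m ω))) :=
    condEnt_congr_right hq hP
      (by
        intro ω ω' hω hω' h
        have hA : S.A n m ω = S.A n m ω' := congrArg Prod.fst h
        have hD : S.DD m ω = S.DD m ω' := congrArg Prod.snd h
        simp only [Prod.mk.injEq]
        exact ⟨hD, hA, hD_T ω ω' hω hω' hD⟩)
      (by
        intro ω ω' hω hω' h
        have hD : S.DD m ω = S.DD m ω' := congrArg Prod.fst h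
        have hA : S.A n m ω = S.A n m ω' := congrArg (fun p => p.2.1) h
        simp only [Prod.mk.injEq]
        exact ⟨hA, hD⟩)
  -- the conditional mutual information vanishes
  have hcmi_le : cmi q S.μ (S.W m) (S.DD m) (fun ω => (S.A n m ω, S.TT n m m ω)) ≤ 0 := by
    have c1 : cmi q S.μ (S.W m) (S.DD m) (fun ω => (S.A n m ω, S.TT n m m ω))
        = cmi q S.μ (S.DD m) (S.W m) (fun ω => (S.A n m ω, S.TT n m m ω)) :=
      cmi_comm _ _ _
    have c2 : cmi q S.μ (S.DD m) (fun ω => (S.A n m ω, S.W m ω)) (S.TT n m m)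
        = cmi q S.μ (S.DD m) (S.A n m) (S.TT n m m)
          + cmi q S.μ (S.DD m) (S.W m) (fun ω => (S.A n m ω, S.TT n m m ω)) :=
      cmi_chain _ _ _ _
    have c2nn := cmi_nonneg hq hP (S.DD m) (S.A n m) (S.TT n m m)
    have c3 : cmi q S.μ (S.DD m) (fun ω => ((S.A n m ω, S.W m ω), S.R m ω)) (S.TT n m m)
        = cmi q S.μ (S.DD m) (fun ω => (S.A n m ω, S.W m ω)) (S.TT n m m)
          + cmi q S.μ (S.DD m) (S.R m)
              (fun ω => ((S.A n m ω, S.W m ω), S.TT n m m ω)) :=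
      cmi_chain _ _ _ _
    have c3nn := cmi_nonneg hq hP (S.DD m) (S.R m)
      (fun ω => ((S.A n m ω, S.W m ω), S.TT n m m ω))
    have c4 : cmi q S.μ (S.DD m) (fun ω => ((S.A n m ω, S.W m ω), S.R m ω)) (S.TT n m m)
        = cmi q S.μ (S.DD m) (fun ω => ((S.W m ω, S.R m ω), S.A n m ω)) (S.TT n m m) :=
      cmi_congr_mid (fun ω' ω => by
        simp only [Prod.mk.injEq]
        tauto)
    have c5 : cmi q S.μ (S.DD m) (fun ω => ((S.W m ω, S.R m ω), S.A n m ω)) (S.TT n m m)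
        = cmi q S.μ (S.DD m) (fun ω => (S.W m ω, S.R m ω)) (S.TT n m m)
          + cmi q S.μ (S.DD m) (S.A n m)
              (fun ω => ((S.W m ω, S.R m ω), S.TT n m m ω)) :=
      cmi_chain _ _ _ _
    have c6 : cmi q S.μ (S.DD m) (fun ω => (S.W m ω, S.R m ω)) (S.TT n m m) = 0 := by
      have hcomm : cmi q S.μ (S.DD m) (fun ω => (S.W m ω, S.R m ω)) (S.TT n m m)
          = cmi q S.μ (fun ω => (S.W m ω, S.R m ω)) (S.DD m) (S.TT n m m) :=
        cmi_comm _ _ _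
      have hVDT : condEnt q S.μ (fun ω => (S.W m ω, S.R m ω))
            (fun ω => (S.DD m ω, S.TT n m m ω))
          = condEnt q S.μ (fun ω => (S.W m ω, S.R m ω)) (S.DD m) :=
        condEnt_congr_right hq hP
          (aDet_of_det fun ω ω' h => congrArg Prod.fst h)
          (aDet_pair (fun ω ω' _ _ h => h) hD_T)
      have hVD : condEnt q S.μ (fun ω => (S.W m ω, S.R m ω)) (S.DD m)
          = ent q S.μ (fun ω => (S.W m ω, S.R m ω)) := condEnt_of_indep hP (S.M2 m)
      have hVT : condEnt q S.μ (fun ω => (S.W m ω, S.R m ω)) (S.TT n m m)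
          ≤ ent q S.μ (fun ω => (S.W m ω, S.R m ω)) := condEnt_le_ent hq hP _ _
      have hnn := cmi_nonneg hq hP (fun ω => (S.W m ω, S.R m ω)) (S.DD m) (S.TT n m m)
      unfold cmi at hcomm hnn ⊢
      linarith
    have c7 : cmi q S.μ (S.DD m) (S.A n m)
        (fun ω => ((S.W m ω, S.R m ω), S.TT n m m ω)) = 0 := by
      have hcomm : cmi q S.μ (S.DD m) (S.A n m)
            (fun ω => ((S.W m ω, S.R m ω), S.TT n m m ω))
          = cmi q S.μ (S.A n m) (S.DD m)
            (fun ω => ((S.W m ω, S.R m ω), S.TT n m m ω)) := cmi_comm _ _ _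
      have hA0 : condEnt q S.μ (S.A n m)
          (fun ω => ((S.W m ω, S.R m ω), S.TT n m m ω)) = 0 :=
        condEnt_zero_of_aDet hP hdetA
      have hle := cmi_le_left hq hP (S.A n m) (S.DD m)
        (fun ω => ((S.W m ω, S.R m ω), S.TT n m m ω))
      have hnn := cmi_nonneg hq hP (S.DD m) (S.A n m)
        (fun ω => ((S.W m ω, S.R m ω), S.TT n m m ω))
      linarith
    linarith
  have hcmi_def : cmi q S.μ (S.W m) (S.DD m) (fun ω => (S.A n m ω, S.TT n m m ω))
      = condEnt q S.μ (S.W m) (fun ω => (S.A n m ω, S.TT n m m ω))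
        - condEnt q S.μ (S.W m)
            (fun ω => (S.DD m ω, (S.A n m ω, S.TT n m m ω))) := rfl
  have hle2 := condEnt_le_ent hq hP (S.W m) (fun ω => (S.A n m ω, S.DD m ω))
  linarith

/-- D-step : at desired index `m`, the answer of a single server holding edge `m`,
given `D`, has entropy at most `H(R m)`. -/
lemma Scheme.answer_le (S : Scheme q N K L F Ω) (m : Fin K) (n : Fin N)
    (hn : S.e1 m = n ∨ S.e2 m = n) (k₀ : Fin K) (hk₀ : k₀ ≠ m) :
    condEnt q S.μ (S.A n m) (S.DD m) ≤ ent q S.μ (S.R m) := by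
  have hq : 1 < q := S.one_lt_q
  have hP : IsPMF S.μ := S.isPMF
  have hdag := S.dagger m n hn k₀ hk₀
  -- copies of determination facts
  have hD_U : aDet S.μ (S.DD m) S.U := aDet_of_det fun ω ω' h => congrArg Prod.fst h
  have hD_Wo : aDet S.μ (S.DD m) (fun ω => (fun ℓ : {ℓ : Fin K // ℓ ≠ m} => S.W ℓ ω)) :=
    aDet_of_det fun ω ω' h => congrArg (fun p => p.2.1) h
  have hD_Ro : aDet S.μ (S.DD m) (fun ω => (fun ℓ : {ℓ : Fin K // ℓ ≠ m} => S.R ℓ ω)) :=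
    aDet_of_det fun ω ω' h => congrArg (fun p => p.2.2) h
  have hD_Q : aDet S.μ (S.DD m) (S.Q n m) := aDet_trans hD_U (S.aDet_Q n m)
  have hdetVD_A : aDet S.μ (fun ω => ((S.W m ω, S.R m ω), S.DD m ω)) (S.A n m) := by
    intro ω ω' hω hω' h
    have hV : (S.W m ω, S.R m ω) = (S.W m ω', S.R m ω') := congrArg Prod.fst h
    have hD : S.DD m ω = S.DD m ω' := congrArg Prod.snd h
    have hWm : S.W m ω = S.W m ω' := congrArg Prod.fst hV
    have hRm : S.R m ω = S.R m ω' := congrArg Prod.snd hV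
    apply (S.aDet_A n m) ω ω' hω hω'
    simp only [Prod.mk.injEq]
    refine ⟨hD_Q ω ω' hω hω' hD, ?_, ?_⟩
    · funext j'
      by_cases hj : j'.1 = m
      · rw [hj]; exact hWm
      · exact congrFun (hD_Wo ω ω' hω hω' hD) ⟨j'.1, hj⟩
    · funext j'
      by_cases hj : j'.1 = m
      · rw [hj]; exact hRm
      · exact congrFun (hD_Ro ω ω' hω hω' hD) ⟨j'.1, hj⟩
  have h1 : condEnt q S.μ (S.A n m) (S.DD m)
      - condEnt q S.μ (S.A n m) (fun ω => ((S.W m ω, S.R m ω), S.DD m ω))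
      = condEnt q S.μ (fun ω => (S.W m ω, S.R m ω)) (S.DD m)
        - condEnt q S.μ (fun ω => (S.W m ω, S.R m ω))
            (fun ω => (S.A n m ω, S.DD m ω)) := cmi_comm _ _ _
  have h2 : condEnt q S.μ (S.A n m) (fun ω => ((S.W m ω, S.R m ω), S.DD m ω)) = 0 :=
    condEnt_zero_of_aDet hP hdetVD_A
  have hVD : condEnt q S.μ (fun ω => (S.W m ω, S.R m ω)) (S.DD m)
      = ent q S.μ (fun ω => (S.W m ω, S.R m ω)) := condEnt_of_indep hP (S.M2 m)
  have hWR : IndepRV S.μ (S.W m) (S.R m) := by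
    have h := indepRV_comp (S.M1 m) id (fun p => p.2.1 m)
    exact indepRV_symm h
  have hsplitV : ent q S.μ (fun ω => (S.W m ω, S.R m ω))
      = ent q S.μ (S.W m) + ent q S.μ (S.R m) := ent_pair_of_indep hP hWR
  have hchain : condEnt q S.μ (fun ω => (S.W m ω, S.R m ω))
        (fun ω => (S.A n m ω, S.DD m ω))
      = condEnt q S.μ (S.W m) (fun ω => (S.A n m ω, S.DD m ω))
        + condEnt q S.μ (S.R m)
            (fun ω => (S.W m ω, (S.A n m ω, S.DD m ω))) := condEnt_pair_chain _ _ _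
  have hRnn := condEnt_nonneg hq hP (S.R m)
    (fun ω => (S.W m ω, (S.A n m ω, S.DD m ω)))
  linarith

/-- the common randomness of every edge has entropy at least `L`. -/
lemma Scheme.entR_ge (S : Scheme q N K L F Ω) (hK : 2 ≤ K) (m : Fin K) (i j : Fin N)
    (h1 : S.e1 m = i) (h2 : S.e2 m = j) :
    (L:ℝ) ≤ ent q S.μ (S.R m) := by
  have hq : 1 < q := S.one_lt_q
  have hP : IsPMF S.μ := S.isPMF
  obtain ⟨k₀, hk₀⟩ : ∃ k₀ : Fin K, k₀ ≠ m := by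
    have h0 : (0:ℕ) < K := by omega
    have h1' : (1:ℕ) < K := by omega
    by_cases hm : m = ⟨0, h0⟩
    · refine ⟨⟨1, h1'⟩, ?_⟩
      rw [hm]
      intro hcon
      have := congrArg Fin.val hcon
      simp at this
    · exact ⟨⟨0, h0⟩, fun hcon => hm hcon.symm⟩
  set C : Ω → (S.AT × S.AT)
      × (S.UT × ({ℓ : Fin K // ℓ ≠ m} → Fin L → F) × ({ℓ : Fin K // ℓ ≠ m} → S.RT)) :=
    fun ω => ((S.A i m ω, S.A j m ω), S.DD m ω) with hC
  have hC_D : aDet S.μ C (S.DD m) := aDet_of_det fun ω ω' h => congrArg Prod.snd h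
  have hC_U : aDet S.μ C S.U := aDet_of_det fun ω ω' h => congrArg (fun p => p.2.1) h
  have hD_Wo : aDet S.μ (S.DD m) (fun ω => (fun ℓ : {ℓ : Fin K // ℓ ≠ m} => S.W ℓ ω)) :=
    aDet_of_det fun ω ω' h => congrArg (fun p => p.2.1) h
  have hD_Ro : aDet S.μ (S.DD m) (fun ω => (fun ℓ : {ℓ : Fin K // ℓ ≠ m} => S.R ℓ ω)) :=
    aDet_of_det fun ω ω' h => congrArg (fun p => p.2.2) h
  -- all answers at index m are a.s. determined by C
  have hC_Aall : aDet S.μ C (fun ω => (fun n' : Fin N => S.A n' m ω)) := by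
    intro ω ω' hω hω' hc
    have hAi : S.A i m ω = S.A i m ω' := congrArg (fun p => p.1.1) hc
    have hAj : S.A j m ω = S.A j m ω' := congrArg (fun p => p.1.2) hc
    have hD : S.DD m ω = S.DD m ω' := congrArg Prod.snd hc
    funext n'
    by_cases hni : n' = i
    · subst hni; exact hAi
    by_cases hnj : n' = j
    · subst hnj; exact hAj
    apply (S.aDet_A n' m) ω ω' hω hω'
    simp only [Prod.mk.injEq]
    refine ⟨(S.aDet_Q n' m) ω ω' hω hω' (congrArg Prod.fst hD), ?_, ?_⟩
    · funext j'
      have hjm : j'.1 ≠ m := by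
        intro hcon
        rcases j'.2 with h | h
        · rw [hcon, h1] at h
          exact hni h.symm
        · rw [hcon, h2] at h
          exact hnj h.symm
      exact congrFun (hD_Wo ω ω' hω hω' hD) ⟨j'.1, hjm⟩
    · funext j'
      have hjm : j'.1 ≠ m := by
        intro hcon
        rcases j'.2 with h | h
        · rw [hcon, h1] at h
          exact hni h.symm
        · rw [hcon, h2] at h
          exact hnj h.symm
      exact congrFun (hD_Ro ω ω' hω hω' hD) ⟨j'.1, hjm⟩
  have hrelm : aDet S.μ (fun ω => ((fun n' : Fin N => S.A n' m ω), S.U ω)) (S.W m) :=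
    aDet_of_condEnt_eq_zero hq hP (S.reliability m)
  have hC_W : aDet S.μ C (S.W m) := aDet_trans (aDet_pair hC_Aall hC_U) hrelm
  -- R m is a.s. determined by C (randomness recoverability at server i)
  have hC_Rm : aDet S.μ C (S.R m) := by
    have hrr : aDet S.μ (fun ω => (S.A i m ω,
        (fun j' : {j' : Fin K // S.e1 j' = i ∨ S.e2 j' = i} => S.W j' ω),
        (fun m' : {m' : Fin K // (S.e1 m' = i ∨ S.e2 m' = i) ∧ m' ≠ m} => S.R m' ω),
        S.Q i m ω)) (S.R m) :=
      aDet_of_condEnt_eq_zero hq hP (S.rand_recov m m i (Or.inl h1))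
    refine aDet_trans ?_ hrr
    intro ω ω' hω hω' hc
    have hAi : S.A i m ω = S.A i m ω' := congrArg (fun p => p.1.1) hc
    have hD : S.DD m ω = S.DD m ω' := congrArg Prod.snd hc
    simp only [Prod.mk.injEq]
    refine ⟨hAi, ?_, ?_, (S.aDet_Q i m) ω ω' hω hω' (congrArg Prod.fst hD)⟩
    · funext j'
      by_cases hj : j'.1 = m
      · rw [hj]
        exact hC_W ω ω' hω hω' hc
      · exact congrFun (hD_Wo ω ω' hω hω' hD) ⟨j'.1, hj⟩
    · funext m'
      exact congrFun (hD_Ro ω ω' hω hω' hD) ⟨m'.1, m'.2.2⟩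
  -- C-step : L + H(R m) ≤ H(A_i, A_j | D)
  have hdiff : condEnt q S.μ (fun ω => (S.W m ω, S.R m ω)) (S.DD m)
      - condEnt q S.μ (fun ω => (S.W m ω, S.R m ω))
          (fun ω => ((S.A i m ω, S.A j m ω), S.DD m ω))
      ≤ condEnt q S.μ (fun ω => (S.A i m ω, S.A j m ω)) (S.DD m) :=
    condEnt_diff_le hq hP _ _ _
  have hV0 : condEnt q S.μ (fun ω => (S.W m ω, S.R m ω))
      (fun ω => ((S.A i m ω, S.A j m ω), S.DD m ω)) = 0 :=
    condEnt_zero_of_aDet hP (aDet_pair hC_W hC_Rm)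
  have hVD : condEnt q S.μ (fun ω => (S.W m ω, S.R m ω)) (S.DD m)
      = ent q S.μ (fun ω => (S.W m ω, S.R m ω)) := condEnt_of_indep hP (S.M2 m)
  have hWR : IndepRV S.μ (S.W m) (S.R m) := by
    have h := indepRV_comp (S.M1 m) id (fun p => p.2.1 m)
    exact indepRV_symm h
  have hsplitV : ent q S.μ (fun ω => (S.W m ω, S.R m ω))
      = ent q S.μ (S.W m) + ent q S.μ (S.R m) := ent_pair_of_indep hP hWR
  have hWm := S.ent_Wm m
  -- subadditivity of the pair answer entropy
  have hch : condEnt q S.μ (fun ω => (S.A i m ω, S.A j m ω)) (S.DD m)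
      = condEnt q S.μ (S.A i m) (S.DD m)
        + condEnt q S.μ (S.A j m) (fun ω => (S.A i m ω, S.DD m ω)) :=
    condEnt_pair_chain _ _ _
  have hmono : condEnt q S.μ (S.A j m) (fun ω => (S.A i m ω, S.DD m ω))
      ≤ condEnt q S.μ (S.A j m) (S.DD m) :=
    condEnt_mono_right hq hP (aDet_of_det fun ω ω' h => congrArg Prod.snd h)
  have hAi := S.answer_le m i (Or.inl h1) k₀ hk₀
  have hAj := S.answer_le m j (Or.inr h2) k₀ hk₀
  linarith

theorem pair_answer_bound'
    {q N K L : ℕ} {F : Type} [Field F] [Fintype F]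
    (hK : 2 ≤ K)
    (S : Scheme q N K L F Ω) (i j : Fin N) (m : Fin K)
    (h1 : S.e1 m = i) (h2 : S.e2 m = j) :
    ∀ k : Fin K,
      2 * (L : ℝ) ≤ condEnt q S.μ (S.A i k) S.U + condEnt q S.μ (S.A j k) S.U := by
  intro k
  have hRi := S.server_bound m i (Or.inl h1) k
  have hRj := S.server_bound m j (Or.inr h2) k
  have hL := S.entR_ge hK m i j h1 h2
  linarith

end SchemeLemmas

/-- **Per-edge answer-size bound (eq. (42)).** For every pair of servers `(i, j)`
sharing a message (i.e. `{i, j}` is an edge of the graph) and every desired index `k`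
(not necessarily the message stored on that edge),
`H(A_i^[k] | 𝒬) + H(A_j^[k] | 𝒬) ≥ 2·L`. -/
theorem pair_answer_bound
    {q N K L : ℕ} {F : Type} [Field F] [Fintype F] {Ω : Type} [Fintype Ω]
    (hN : 3 ≤ N) (hK : 2 ≤ K) (hL : 1 ≤ L)
    (S : Scheme q N K L F Ω) (i j : Fin N)
    (hij : ∃ m : Fin K, (S.e1 m = i ∧ S.e2 m = j) ∨ (S.e1 m = j ∧ S.e2 m = i)) :
    ∀ k : Fin K,
      2 * (L : ℝ) ≤ condEnt q S.μ (S.A i k) S.U + condEnt q S.μ (S.A j k) S.U := by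
  obtain ⟨m, hm⟩ := hij
  intro k
  rcases hm with ⟨h1, h2⟩ | ⟨h1, h2⟩
  · exact pair_answer_bound' hK S i j m h1 h2 k
  · have h := pair_answer_bound' hK S j i m h1 h2 k
    linarith

end SPIR
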